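/- arXiv:1506.01504 — 6 statements merged into one kernel-verified Lean document; each statement's English description precedes it below -/
import Mathlib

section
/- Let d ≥ 1 and let a₁, …, a_N ∈ s'(ℤ^d). Then the following are equivalent: (1) there exist b₁, …, b_N ∈ s'(ℤ^d) such that b₁(n)a₁(n) + ⋯ + b_N(n)a_N(n) = 1 for all n ∈ ℤ^d; (2) there exist δ > 0 and K ∈ ℕ such that for all n ∈ ℤ^d, |a₁(n)| + ⋯ + |a_N(n)| ≥ δ(1 + ‖n‖₁)^{−K}. -/
/-- The 1-norm of a lattice point `n ∈ ℤ^d`. -/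
def norm1 {d : ℕ} (n : Fin d → ℤ) : ℝ := ∑ i, |(n i : ℝ)|

/-- `a : ℤ^d → ℂ` has at most polynomial growth, i.e. belongs to `s'(ℤ^d)`. -/
def PolyGrowth {d : ℕ} (a : (Fin d → ℤ) → ℂ) : Prop :=
  ∃ M : ℝ, 0 < M ∧ ∃ k : ℕ, ∀ n : Fin d → ℤ, ‖a n‖ ≤ M * (1 + norm1 n) ^ k

lemma norm1_nonneg {d : ℕ} (n : Fin d → ℤ) : 0 ≤ norm1 n :=
  Finset.sum_nonneg fun i _ => abs_nonneg _

lemma one_le_base {d : ℕ} (n : Fin d → ℤ) : (1 : ℝ) ≤ 1 + norm1 n :=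
  le_add_of_nonneg_right (norm1_nonneg n)

lemma base_pos {d : ℕ} (n : Fin d → ℤ) : (0 : ℝ) < 1 + norm1 n :=
  lt_of_lt_of_le one_pos (one_le_base n)

/-- Uniform polynomial bound for a finite family. -/
lemma uniform_bound {d N : ℕ} (f : Fin N → (Fin d → ℤ) → ℂ)
    (h : ∀ i, PolyGrowth (f i)) :
    ∃ M : ℝ, 0 < M ∧ ∃ k : ℕ, ∀ i (n : Fin d → ℤ),
      ‖f i n‖ ≤ M * (1 + norm1 n) ^ k := by
  choose M hM k hk using h
  have hsnn : (0:ℝ) ≤ ∑ j, M j := Finset.sum_nonneg fun j _ => (hM j).le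
  refine ⟨1 + ∑ i, M i, by linarith, Finset.univ.sup k, fun i n => ?_⟩
  have hMle : M i ≤ 1 + ∑ j, M j := by
    have : M i ≤ ∑ j, M j :=
      Finset.single_le_sum (fun j _ => (hM j).le) (Finset.mem_univ i)
    linarith
  have hple : (1 + norm1 n) ^ k i ≤ (1 + norm1 n) ^ Finset.univ.sup k :=
    pow_le_pow_right₀ (one_le_base n) (Finset.le_sup (Finset.mem_univ i))
  calc ‖f i n‖ ≤ M i * (1 + norm1 n) ^ k i := hk i n
    _ ≤ (1 + ∑ j, M j) * (1 + norm1 n) ^ Finset.univ.sup k :=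
        mul_le_mul hMle hple (pow_nonneg (base_pos n).le _) (by linarith)

theorem corona_type_theorem (d N : ℕ) (hd : 1 ≤ d)
    (a : Fin N → (Fin d → ℤ) → ℂ) (ha : ∀ i, PolyGrowth (a i)) :
    (∃ b : Fin N → (Fin d → ℤ) → ℂ, (∀ i, PolyGrowth (b i)) ∧
      ∀ n : Fin d → ℤ, ∑ i, b i n * a i n = 1) ↔
    (∃ δ : ℝ, 0 < δ ∧ ∃ K : ℕ, ∀ n : Fin d → ℤ,
      δ * (1 + norm1 n) ^ (-(K : ℤ)) ≤ ∑ i, ‖a i n‖) := by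
  constructor
  · rintro ⟨b, hb, hsum⟩
    obtain ⟨M, hM, k, hMk⟩ := uniform_bound b hb
    refine ⟨1 / M, by positivity, k, fun n => ?_⟩
    set t : ℝ := 1 + norm1 n with ht
    have htpos : 0 < t := base_pos n
    have h1 : (1 : ℝ) ≤ M * t ^ k * ∑ i, ‖a i n‖ := by
      calc (1 : ℝ) = ‖∑ i, b i n * a i n‖ := by rw [hsum n]; simp
        _ ≤ ∑ i, ‖b i n * a i n‖ := norm_sum_le _ _
        _ = ∑ i, ‖b i n‖ * ‖a i n‖ := by simp [norm_mul]
        _ ≤ ∑ i, (M * t ^ k) * ‖a i n‖ :=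
            Finset.sum_le_sum fun i _ =>
              mul_le_mul_of_nonneg_right (hMk i n) (norm_nonneg _)
        _ = M * t ^ k * ∑ i, ‖a i n‖ := by rw [← Finset.mul_sum]
    have hpos : (0:ℝ) < M * t ^ k := by positivity
    rw [zpow_neg, zpow_natCast, one_div, ← mul_inv, ← one_div, div_le_iff₀ hpos]
    calc (1:ℝ) ≤ M * t ^ k * ∑ i, ‖a i n‖ := h1
      _ = (∑ i, ‖a i n‖) * (M * t ^ k) := by ring
  · rintro ⟨δ, hδ, K, hK⟩
    obtain ⟨M, hM, k, hMk⟩ := uniform_bound a ha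
    have hsum_pos : ∀ n, 0 < ∑ i, ‖a i n‖ := fun n =>
      lt_of_lt_of_le (mul_pos hδ (zpow_pos (base_pos n) _)) (hK n)
    have hN : (0:ℝ) < N := by
      rcases Nat.eq_zero_or_pos N with h | h
      · exfalso
        have h0 := hsum_pos (fun _ => 0)
        subst h
        simp at h0
      · exact_mod_cast h
    set S : (Fin d → ℤ) → ℝ := fun n => ∑ i, (‖a i n‖) ^ 2 with hSdef
    have hCS : ∀ n, (∑ i, ‖a i n‖) ^ 2 ≤ N * S n := fun n => by
      simpa using sq_sum_le_card_mul_sum_sq (s := Finset.univ)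
        (f := fun i => ‖a i n‖)
    have hSpos : ∀ n, 0 < S n := by
      intro n
      have h2 : 0 < (∑ i, ‖a i n‖) ^ 2 := pow_pos (hsum_pos n) 2
      nlinarith [hCS n]
    -- lower bound for S
    have hS_lb : ∀ n, δ ^ 2 ≤ N * S n * (1 + norm1 n) ^ (2 * K) := by
      intro n
      set t : ℝ := 1 + norm1 n with ht
      have htpos : 0 < t := base_pos n
      have htK : 0 < t ^ K := pow_pos htpos K
      have h1 : δ * (t ^ K)⁻¹ ≤ ∑ i, ‖a i n‖ := by
        have := hK n
        rwa [zpow_neg, zpow_natCast] at this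
      have h1' : δ ≤ (∑ i, ‖a i n‖) * t ^ K := by
        have h2 := mul_le_mul_of_nonneg_right h1 htK.le
        calc δ = δ * (t ^ K)⁻¹ * t ^ K := by field_simp
          _ ≤ (∑ i, ‖a i n‖) * t ^ K := h2
      have h2 : (∑ i, ‖a i n‖) ^ 2 ≤ N * S n := hCS n
      have hsq : δ ^ 2 ≤ ((∑ i, ‖a i n‖) * t ^ K) ^ 2 := by
        apply pow_le_pow_left₀ hδ.le h1'
      calc δ ^ 2 ≤ ((∑ i, ‖a i n‖) * t ^ K) ^ 2 := hsq
        _ = (∑ i, ‖a i n‖) ^ 2 * (t ^ K) ^ 2 := by ring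
        _ ≤ N * S n * (t ^ K) ^ 2 :=
            mul_le_mul_of_nonneg_right h2 (sq_nonneg _)
        _ = N * S n * t ^ (2 * K) := by rw [← pow_mul, mul_comm K 2]
    refine ⟨fun i n => (starRingEnd ℂ) (a i n) / (S n : ℂ), fun i => ?_, fun n => ?_⟩
    · -- polynomial growth of b i
      refine ⟨M * N / δ ^ 2, by positivity, k + 2 * K, fun n => ?_⟩
      set t : ℝ := 1 + norm1 n with ht
      have htpos : 0 < t := base_pos n
      have habs : ‖(starRingEnd ℂ) (a i n) / (S n : ℂ)‖
          = ‖a i n‖ / S n := by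
        rw [norm_div, Complex.norm_conj, Complex.norm_real, Real.norm_eq_abs, abs_of_pos (hSpos n)]
      rw [habs, div_le_iff₀ (hSpos n)]
      have key : ‖a i n‖ * δ ^ 2 ≤ M * N * t ^ (k + 2 * K) * S n := by
        calc ‖a i n‖ * δ ^ 2
            ≤ (M * t ^ k) * (N * S n * t ^ (2 * K)) :=
              mul_le_mul (hMk i n) (hS_lb n) (sq_nonneg δ) (by positivity)
          _ = M * N * t ^ (k + 2 * K) * S n := by rw [pow_add]; ring
      have hrw : M * N / δ ^ 2 * t ^ (k + 2 * K) * S n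
          = M * N * t ^ (k + 2 * K) * S n / δ ^ 2 := by ring
      rw [hrw, le_div_iff₀ (by positivity)]
      linarith [key]
    · -- the sum is 1
      have hS0 : (S n : ℂ) ≠ 0 := by
        exact_mod_cast (hSpos n).ne'
      have : ∑ i, (starRingEnd ℂ) (a i n) / (S n : ℂ) * a i n
          = (∑ i, a i n * (starRingEnd ℂ) (a i n)) / (S n : ℂ) := by
        rw [Finset.sum_div]
        exact Finset.sum_congr rfl fun i _ => by ring
      rw [this]
      have hnorm : ∑ i, a i n * (starRingEnd ℂ) (a i n) = (S n : ℂ) := by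
        simp only [Complex.mul_conj, hSdef]
        push_cast
        exact Finset.sum_congr rfl fun i _ => by
          rw [← Complex.sq_norm]; push_cast; ring
      rw [hnorm, div_self hS0]
end

section
/- The invertible elements of s'(ℤ^d) are dense in s'(ℤ^d) in its weak-* topology as the dual of s(ℤ^d): for every a ∈ s'(ℤ^d), every finite family b₁, …, b_m ∈ s(ℤ^d), and every ε > 0, there exists u ∈ s'(ℤ^d) invertible in s'(ℤ^d) such that |∑_{n∈ℤ^d} (u(n) − a(n)) b_j(n)| < ε for every j = 1, …, m. (Consequently the topological stable rank of s'(ℤ^d) equals 1.) -/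
/-- `b : ℤ^d → ℂ` is rapidly decreasing, i.e. belongs to `s(ℤ^d)`. -/
def RapidDecay {d : ℕ} (b : (Fin d → ℤ) → ℂ) : Prop :=
  ∀ k : ℕ, ∃ C : ℝ, ∀ n : Fin d → ℤ, (1 + norm1 n) ^ k * ‖b n‖ ≤ C

/-- `a` is invertible in `s'(ℤ^d)`. -/
def IsInvertibleSprime {d : ℕ} (a : (Fin d → ℤ) → ℂ) : Prop :=
  PolyGrowth a ∧ ∃ b : (Fin d → ℤ) → ℂ, PolyGrowth b ∧ ∀ n, a n * b n = 1

/-- auxiliary weight -/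
noncomputable def wgt {d : ℕ} (n : Fin d → ℤ) : ℝ := ∏ i, ((1 + |(n i : ℝ)|) ^ 2)⁻¹

lemma wgt_pos {d : ℕ} (n : Fin d → ℤ) : 0 < wgt n := by
  unfold wgt; positivity

lemma wgt_le_one {d : ℕ} (n : Fin d → ℤ) : wgt n ≤ 1 := by
  unfold wgt
  refine Finset.prod_le_one (fun i _ => by positivity) (fun i _ => ?_)
  rw [inv_le_one_iff₀]
  right
  nlinarith [abs_nonneg ((n i : ℝ))]

lemma abs_le_norm1 {d : ℕ} (n : Fin d → ℤ) (i : Fin d) : |(n i : ℝ)| ≤ norm1 n :=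
  Finset.single_le_sum (f := fun i => |(n i : ℝ)|) (fun i _ => abs_nonneg _) (Finset.mem_univ i)

lemma wgt_inv_le {d : ℕ} (n : Fin d → ℤ) : (wgt n)⁻¹ ≤ (1 + norm1 n) ^ (2 * d) := by
  unfold wgt
  rw [← Finset.prod_inv_distrib]
  simp only [inv_inv]
  calc ∏ i, (1 + |(n i : ℝ)|) ^ 2 ≤ ∏ _i : Fin d, (1 + norm1 n) ^ 2 := by
        refine Finset.prod_le_prod (fun i _ => by positivity) (fun i _ => ?_)
        have := abs_le_norm1 n i
        nlinarith [abs_nonneg ((n i : ℝ)), norm1_nonneg n]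
    _ = (1 + norm1 n) ^ (2 * d) := by
        rw [Finset.prod_const, Finset.card_univ, Fintype.card_fin, ← pow_mul, mul_comm]

lemma summable_int_w : Summable (fun m : ℤ => ((1 + |(m : ℝ)|) ^ 2)⁻¹) := by
  have hnat : Summable (fun n : ℕ => ((1 + (n : ℝ)) ^ 2)⁻¹) := by
    have := (summable_nat_add_iff (f := fun n : ℕ => ((n : ℝ) ^ 2)⁻¹) 1).mpr
      (Real.summable_nat_pow_inv.mpr one_lt_two)
    refine this.congr fun n => ?_
    push_cast
    ring_nf
  apply Summable.of_nat_of_neg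
  · refine hnat.congr fun n => ?_
    simp
  · refine hnat.congr fun n => ?_
    simp

lemma summable_wgt (d : ℕ) : Summable (fun n : Fin d → ℤ => wgt n) := by
  unfold wgt
  induction d with
  | zero => exact Summable.of_finite
  | succ d ih =>
    refine (Equiv.summable_iff (Fin.consEquiv fun _ : Fin (d+1) => ℤ)).mp ?_
    have key : Summable (fun p : ℤ × (Fin d → ℤ) =>
        ((1 + |(p.1 : ℝ)|) ^ 2)⁻¹ * ∏ i, ((1 + |(p.2 i : ℝ)|) ^ 2)⁻¹) := by
      have h1 : 0 ≤ (fun m : ℤ => ((1 + |(m : ℝ)|) ^ 2)⁻¹) := fun x => by positivity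
      have h2 : 0 ≤ (fun n : Fin d → ℤ => ∏ i, ((1 + |(n i : ℝ)|) ^ 2)⁻¹) := fun x => by positivity
      exact Summable.mul_of_nonneg (f := fun m : ℤ => ((1 + |(m:ℝ)|)^2)⁻¹)
        (g := fun n : Fin d → ℤ => ∏ i, ((1 + |(n i : ℝ)|)^2)⁻¹) summable_int_w ih h1 h2
    refine key.congr fun p => ?_
    simp [Fin.consEquiv, Fin.prod_univ_succ, mul_comm]

/-- The invertible elements of `s'(ℤ^d)` are dense in the weak-* topology:
the topological stable rank of `s'(ℤ^d)` is one. -/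
theorem units_weakstar_dense (d m : ℕ) (hd : 1 ≤ d)
    (a : (Fin d → ℤ) → ℂ) (ha : PolyGrowth a)
    (b : Fin m → (Fin d → ℤ) → ℂ) (hb : ∀ j, RapidDecay (b j))
    (ε : ℝ) (hε : 0 < ε) :
    ∃ u : (Fin d → ℤ) → ℂ, IsInvertibleSprime u ∧
      ∀ j : Fin m, ‖∑' n : Fin d → ℤ, (u n - a n) * b j n‖ < ε := by
  classical
  obtain ⟨M, hM, K, haM⟩ := ha
  -- uniform bound on the b j
  choose C hC using fun j => hb j 0
  have hCb : ∀ j n, ‖b j n‖ ≤ C j := by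
    intro j n
    have := hC j n
    simpa using this
  set B : ℝ := (∑ j, |C j|) + 1 with hB_def
  have hB1 : 1 ≤ B := by
    have : (0:ℝ) ≤ ∑ j, |C j| := Finset.sum_nonneg fun j _ => abs_nonneg _
    linarith
  have hB0 : 0 < B := lt_of_lt_of_le one_pos hB1
  have hCB : ∀ j, C j ≤ B := by
    intro j
    have h1 : |C j| ≤ ∑ j', |C j'| :=
      Finset.single_le_sum (f := fun j' => |C j'|) (fun _ _ => abs_nonneg _) (Finset.mem_univ j)
    have := le_abs_self (C j)
    linarith
  set S : ℝ := ∑' n : Fin d → ℤ, wgt n with hS_def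
  have hS0 : 0 ≤ S := tsum_nonneg fun n => (wgt_pos n).le
  set c : ℝ := ε / (2 * B * (S + 1)) with hc_def
  have hc : 0 < c := by
    apply div_pos hε
    positivity
  -- the perturbation
  set u : (Fin d → ℤ) → ℂ := fun n =>
    if c * wgt n ≤ ‖a n‖ then a n else ((c * wgt n : ℝ) : ℂ) with hu_def
  have hcw_pos : ∀ n : Fin d → ℤ, 0 < c * wgt n := fun n => mul_pos hc (wgt_pos n)
  have hul : ∀ n, c * wgt n ≤ ‖u n‖ := by
    intro n
    rw [hu_def]
    by_cases h : c * wgt n ≤ ‖a n‖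
    · simpa [h] using h
    · simp only [h, if_false, Complex.norm_real, Real.norm_eq_abs]
      rw [abs_of_pos (hcw_pos n)]
  have hu_ne : ∀ n, u n ≠ 0 := by
    intro n hn
    have := hul n
    rw [hn] at this
    simp at this
    exact absurd this (not_le.mpr (hcw_pos n))
  have hdiff : ∀ n, ‖u n - a n‖ ≤ 2 * (c * wgt n) := by
    intro n
    rw [hu_def]
    by_cases h : c * wgt n ≤ ‖a n‖
    · simp only [h, if_true, sub_self, norm_zero]
      linarith [(hcw_pos n).le]
    · simp only [h, if_false]
      push_neg at h
      calc ‖((c * wgt n : ℝ) : ℂ) - a n‖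
          ≤ ‖((c * wgt n : ℝ) : ℂ)‖ + ‖a n‖ := by
            exact norm_sub_le _ _
        _ ≤ c * wgt n + c * wgt n := by
            rw [Complex.norm_real, Real.norm_eq_abs, abs_of_pos (hcw_pos n)]
            linarith [h.le]
        _ = 2 * (c * wgt n) := by ring
  refine ⟨u, ⟨?_, ?_⟩, ?_⟩
  · -- PolyGrowth u
    refine ⟨M + c, by linarith, K, fun n => ?_⟩
    have hpow1 : (1:ℝ) ≤ (1 + norm1 n) ^ K :=
      one_le_pow₀ (by linarith [norm1_nonneg n])
    rw [hu_def]
    by_cases h : c * wgt n ≤ ‖a n‖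
    · simp only [h, if_true]
      calc ‖a n‖ ≤ M * (1 + norm1 n) ^ K := haM n
        _ ≤ (M + c) * (1 + norm1 n) ^ K := by nlinarith
    · simp only [h, if_false, Complex.norm_real, Real.norm_eq_abs]
      rw [abs_of_pos (hcw_pos n)]
      calc c * wgt n ≤ c * 1 := by
            have := wgt_le_one n
            nlinarith
        _ ≤ (M + c) * (1 + norm1 n) ^ K := by nlinarith
  · -- inverse with polynomial growth
    refine ⟨fun n => (u n)⁻¹, ⟨c⁻¹, inv_pos.mpr hc, 2 * d, fun n => ?_⟩,
      fun n => mul_inv_cancel₀ (hu_ne n)⟩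
    rw [norm_inv]
    have h1 : (‖u n‖)⁻¹ ≤ (c * wgt n)⁻¹ := by
      apply inv_anti₀ (hcw_pos n) (hul n)
    calc (‖u n‖)⁻¹ ≤ (c * wgt n)⁻¹ := h1
      _ = c⁻¹ * (wgt n)⁻¹ := by rw [mul_inv]
      _ ≤ c⁻¹ * (1 + norm1 n) ^ (2 * d) := by
          have := wgt_inv_le n
          have hc' : 0 < c⁻¹ := inv_pos.mpr hc
          nlinarith
  · -- the approximation estimate
    intro j
    have hterm : ∀ n, ‖(u n - a n) * b j n‖ ≤ 2 * c * B * wgt n := by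
      intro n
      rw [norm_mul]
      have h1 := hdiff n
      have h2 := hCb j n
      have h3 : (0:ℝ) ≤ ‖b j n‖ := norm_nonneg _
      have h4 : (0:ℝ) ≤ ‖u n - a n‖ := norm_nonneg _
      have h5 := (wgt_pos n).le
      have h6 := hCB j
      have h7 : ‖u n - a n‖ * ‖b j n‖ ≤ (2 * (c * wgt n)) * C j :=
        mul_le_mul h1 h2 h3 (by linarith [(hcw_pos n).le])
      have h8 : (2 * (c * wgt n)) * C j ≤ (2 * (c * wgt n)) * B :=
        mul_le_mul_of_nonneg_left h6 (by linarith [(hcw_pos n).le])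
      nlinarith
    have hsumM : Summable (fun n : Fin d → ℤ => 2 * c * B * wgt n) :=
      (summable_wgt d).mul_left _
    have hsum : Summable (fun n : Fin d → ℤ => ‖(u n - a n) * b j n‖) :=
      Summable.of_nonneg_of_le (fun n => norm_nonneg _) hterm hsumM
    have hnorm : ‖∑' n : Fin d → ℤ, (u n - a n) * b j n‖
        ≤ ∑' n : Fin d → ℤ, ‖(u n - a n) * b j n‖ := by
      simpa using
        norm_tsum_le_tsum_norm (f := fun n : Fin d → ℤ => (u n - a n) * b j n)
          (by simpa using hsum)
    have hle2 : ∑' n : Fin d → ℤ, ‖(u n - a n) * b j n‖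
        ≤ 2 * c * B * S := by
      calc ∑' n : Fin d → ℤ, ‖(u n - a n) * b j n‖
          ≤ ∑' n : Fin d → ℤ, 2 * c * B * wgt n := Summable.tsum_le_tsum hterm hsum hsumM
        _ = 2 * c * B * S := by rw [hS_def, tsum_mul_left]
      
    have hfinal : 2 * c * B * S < ε := by
      have hX : (0:ℝ) < 2 * B * (S + 1) := by positivity
      have hq : (2 * B * S) / (2 * B * (S + 1)) < 1 := (div_lt_one hX).mpr (by nlinarith)
      have heq : 2 * c * B * S = ε * ((2 * B * S) / (2 * B * (S + 1))) := by
        rw [hc_def]; field_simp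
      rw [heq]
      nlinarith [mul_lt_mul_of_pos_left hq hε]
    linarith
end

section
/- Let R be a subring of the ring of all functions ℤ^d → ℂ (with pointwise operations) satisfying: (P1) every bounded function ℤ^d → ℂ belongs to R; (P2) if f ∈ R then the pointwise complex conjugate of f belongs to R; (P3) if f ∈ R and there exists δ > 0 with |f(n)| ≥ δ for all n ∈ ℤ^d, then f is invertible in R. Then the Bass stable rank of R is 1: for every a₁, a₂, b₁, b₂ ∈ R with b₁(n)a₁(n) + b₂(n)a₂(n) = 1 for all n ∈ ℤ^d, there exists h ∈ R such that a₁ + h·a₂ is invertible in R. -/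
/-- Unimodular phase of a complex number. -/
noncomputable def ufn (z : ℂ) : ℂ := if z = 0 then 1 else z / (‖z‖ : ℂ)

lemma ufn_abs_le (z : ℂ) : ‖ufn z‖ ≤ 1 := by
  unfold ufn
  split_ifs with h
  · simp
  · rw [norm_div, Complex.norm_real, norm_norm,
      div_self (by simpa using h)]

lemma ufn_mul_conj (z : ℂ) : ufn z * (starRingEnd ℂ) (ufn z) = 1 := by
  unfold ufn
  split_ifs with h
  · simp
  · rw [Complex.mul_conj, Complex.normSq_eq_norm_sq]
    rw [norm_div, Complex.norm_real, norm_norm,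
      div_self (by simpa using h)]
    norm_num

lemma conj_ufn_mul (z : ℂ) : (starRingEnd ℂ) (ufn z) * z = (‖z‖ : ℂ) := by
  unfold ufn
  split_ifs with h
  · simp [h]
  · rw [map_div₀, Complex.conj_ofReal, div_mul_eq_mul_div, mul_comm, Complex.mul_conj,
      Complex.normSq_eq_norm_sq]
    have hz : (‖z‖ : ℂ) ≠ 0 := by simpa using h
    field_simp
    push_cast
    ring

lemma key_ineq (x y p q : ℝ) (hx : 0 ≤ x) (hy : 0 ≤ y) (hp : 0 ≤ p) (hq : 0 ≤ q)
    (h : 1 ≤ p * x + q * y) :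
    (1/4 : ℝ) ≤ (x + y^2) * ((1 + p) * (1 + q)^2) := by
  rcases le_or_gt (1/2) (p * x) with h1 | h1
  · have hx1 : (1/2 : ℝ) ≤ x * (1 + p) := by nlinarith
    have hq1 : (1 : ℝ) ≤ (1 + q)^2 := by nlinarith
    nlinarith [sq_nonneg y, mul_nonneg (sq_nonneg y) hp]
  · have h2 : (1/2 : ℝ) ≤ q * y := by linarith
    have hy1 : (1/2 : ℝ) ≤ y * (1 + q) := by nlinarith
    have : (1/4 : ℝ) ≤ y^2 * (1 + q)^2 := by nlinarith
    nlinarith [mul_nonneg (mul_nonneg hx (add_nonneg zero_le_one hp)) (sq_nonneg (1+q)),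
      mul_nonneg (mul_nonneg (sq_nonneg y) hp) (sq_nonneg (1+q))]

/-- The Bass stable rank of a subring `R` of the ring of functions `ℤ^d → ℂ`
containing all bounded functions, stable under complex conjugation, and in which
every element bounded below is invertible, equals one: every unimodular pair over
`R` is reducible. -/
theorem subring_bass_stable_rank_one (d : ℕ)
    (R : Subring ((Fin d → ℤ) → ℂ))
    (hP1 : ∀ f : (Fin d → ℤ) → ℂ, (∃ C : ℝ, ∀ n, ‖f n‖ ≤ C) → f ∈ R)
    (hP2 : ∀ f ∈ R, (fun n => (starRingEnd ℂ) (f n)) ∈ R)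
    (hP3 : ∀ f ∈ R, ∀ δ : ℝ, 0 < δ → (∀ n, δ ≤ ‖f n‖) →
      ∃ g ∈ R, ∀ n, f n * g n = 1)
    (a₁ a₂ b₁ b₂ : (Fin d → ℤ) → ℂ)
    (ha₁ : a₁ ∈ R) (ha₂ : a₂ ∈ R) (hb₁ : b₁ ∈ R) (hb₂ : b₂ ∈ R)
    (hbez : ∀ n : Fin d → ℤ, b₁ n * a₁ n + b₂ n * a₂ n = 1) :
    ∃ h ∈ R, (fun n => a₁ n + h n * a₂ n) ∈ R ∧
      ∃ g ∈ R, ∀ n : Fin d → ℤ, (a₁ n + h n * a₂ n) * g n = 1 := by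
  classical
  -- phase functions
  set κ : (Fin d → ℤ) → ℂ := fun n => ufn (a₁ n) with hκdef
  have hκ : κ ∈ R := hP1 κ ⟨1, fun n => ufn_abs_le _⟩
  have hκc : (fun n => (starRingEnd ℂ) (κ n)) ∈ R := hP2 κ hκ
  have ha₂c : (fun n => (starRingEnd ℂ) (a₂ n)) ∈ R := hP2 a₂ ha₂
  have hc₁ : (fun n => (starRingEnd ℂ) (ufn (b₁ n))) ∈ R := by
    refine hP1 _ ⟨1, fun n => ?_⟩
    rw [Complex.norm_conj]; exact ufn_abs_le _
  have hc₂ : (fun n => (starRingEnd ℂ) (ufn (b₂ n))) ∈ R := by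
    refine hP1 _ ⟨1, fun n => ?_⟩
    rw [Complex.norm_conj]; exact ufn_abs_le _
  -- the function h
  set h : (Fin d → ℤ) → ℂ := fun n => κ n * (starRingEnd ℂ) (a₂ n) with hhdef
  have hh : h ∈ R := R.mul_mem hκ ha₂c
  -- M = |a₁| + |a₂|², W = (1+|b₁|)(1+|b₂|)²
  set M : (Fin d → ℤ) → ℂ :=
    fun n => (starRingEnd ℂ) (κ n) * a₁ n + (starRingEnd ℂ) (a₂ n) * a₂ n with hMdef
  have hM : M ∈ R := R.add_mem (R.mul_mem hκc ha₁) (R.mul_mem ha₂c ha₂)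
  set W : (Fin d → ℤ) → ℂ :=
    fun n => (1 + (starRingEnd ℂ) (ufn (b₁ n)) * b₁ n)
      * (1 + (starRingEnd ℂ) (ufn (b₂ n)) * b₂ n)^2 with hWdef
  have hW : W ∈ R := by
    have h1 : (fun n => 1 + (starRingEnd ℂ) (ufn (b₁ n)) * b₁ n) ∈ R :=
      R.add_mem R.one_mem (R.mul_mem hc₁ hb₁)
    have h2 : (fun n => 1 + (starRingEnd ℂ) (ufn (b₂ n)) * b₂ n) ∈ R :=
      R.add_mem R.one_mem (R.mul_mem hc₂ hb₂)
    exact R.mul_mem h1 (R.pow_mem h2 2)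
  have hF : (fun n => M n * W n) ∈ R := R.mul_mem hM hW
  -- pointwise values
  have hMval : ∀ n, M n = ((‖a₁ n‖ + (‖a₂ n‖)^2 : ℝ) : ℂ) := by
    intro n
    have h1 : (starRingEnd ℂ) (κ n) * a₁ n = (‖a₁ n‖ : ℂ) := conj_ufn_mul _
    have h2 : (starRingEnd ℂ) (a₂ n) * a₂ n = ((‖a₂ n‖)^2 : ℝ) := by
      rw [mul_comm, Complex.mul_conj, Complex.normSq_eq_norm_sq]
    rw [hMdef]; simp only []
    rw [h1, h2]; push_cast; ring
  have hWval : ∀ n, W n =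
      (((1 + ‖b₁ n‖) * (1 + ‖b₂ n‖)^2 : ℝ) : ℂ) := by
    intro n
    rw [hWdef]; simp only []
    rw [conj_ufn_mul, conj_ufn_mul]; push_cast; ring
  -- lower bound
  have hlow : ∀ n, (1/4 : ℝ) ≤ ‖M n * W n‖ := by
    intro n
    have hb : (1 : ℝ) ≤ ‖b₁ n‖ * ‖a₁ n‖
        + ‖b₂ n‖ * ‖a₂ n‖ := by
      have := hbez n
      calc (1:ℝ) = ‖b₁ n * a₁ n + b₂ n * a₂ n‖ := by rw [this]; simp
        _ ≤ ‖b₁ n * a₁ n‖ + ‖b₂ n * a₂ n‖ := norm_add_le _ _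
        _ = _ := by rw [norm_mul, norm_mul]
    have key := key_ineq (‖a₁ n‖) (‖a₂ n‖)
      (‖b₁ n‖) (‖b₂ n‖) (norm_nonneg _)
      (norm_nonneg _) (norm_nonneg _) (norm_nonneg _) hb
    rw [hMval n, hWval n, ← Complex.ofReal_mul, Complex.norm_real, Real.norm_eq_abs]
    calc (1/4 : ℝ) ≤ _ := key
      _ ≤ |(‖a₁ n‖ + ‖a₂ n‖^2) *
            ((1 + ‖b₁ n‖) * (1 + ‖b₂ n‖)^2)| := le_abs_self _
  -- invert
  obtain ⟨G, hG, hFG⟩ := hP3 _ hF (1/4) (by norm_num) hlow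
  refine ⟨h, hh, R.add_mem ha₁ (R.mul_mem hh ha₂), ?_⟩
  refine ⟨fun n => (starRingEnd ℂ) (κ n) * (W n * G n),
    R.mul_mem hκc (R.mul_mem hW hG), fun n => ?_⟩
  have huv : κ n * (starRingEnd ℂ) (κ n) = 1 := ufn_mul_conj _
  have hfg := hFG n
  simp only [hhdef, hMdef] at *
  linear_combination ((starRingEnd ℂ) (a₂ n) * a₂ n * W n * G n) * huv + hfg
end

section
/- Every unit of E_exp(ℂ) is of the form z ↦ e^{a+bz}: if f ∈ E_exp(ℂ) and there exists g ∈ E_exp(ℂ) with f(z)g(z) = 1 for all z ∈ ℂ, then there exist constants a, b ∈ ℂ such that f(z) = e^{a+bz} for all z ∈ ℂ. -/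
/-- `f : ℂ → ℂ` is an entire function of exponential type, i.e. belongs to
`E_exp(ℂ)`. -/
def ExpType (f : ℂ → ℂ) : Prop :=
  Differentiable ℂ f ∧
    ∃ C : ℝ, 0 < C ∧ ∃ N : ℕ, ∃ M : ℝ, 0 < M ∧
      ∀ z : ℂ, ‖f z‖ ≤ C * (1 + ‖z‖) ^ N * Real.exp (M * |z.im|)

section UnitsOfEexpProof

open Complex Metric intervalIntegral

lemma entire_exists_primitive {φ : ℂ → ℂ} (hφ : Differentiable ℂ φ) :
    ∃ h : ℂ → ℂ, h 0 = 0 ∧ ∀ z, HasDerivAt h (φ z) z := by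
  set c : ℕ → ℂ := fun n => (Nat.factorial n : ℂ)⁻¹ * iteratedDeriv n φ 0 with hc
  have htay : ∀ z : ℂ, HasSum (fun n => c n * z ^ n) (φ z) := by
    intro z
    have := Complex.hasSum_taylorSeries_of_entire hφ 0 z
    simp only [sub_zero, smul_eq_mul] at this
    convert this using 2 with n
    · rfl
    ring
  refine ⟨fun z => ∑' n, c n / (n + 1) * z ^ (n + 1), ?_, ?_⟩
  · simp
  · intro y
    set R : ℝ := ‖y‖ + 1 with hR
    have hR0 : (0:ℝ) < R := by positivity
    have hsum2R := (htay ((2*R : ℝ) : ℂ)).summable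
    have hbdd : ∃ D : ℝ, ∀ n, ‖c n‖ * (2*R)^n ≤ D := by
      have h0 := hsum2R.tendsto_atTop_zero.norm
      obtain ⟨D, hD⟩ := h0.bddAbove_range
      refine ⟨D, fun n => ?_⟩
      have := hD (Set.mem_range_self n)
      simpa [norm_mul, norm_pow, abs_of_pos hR0] using this
    obtain ⟨D, hD⟩ := hbdd
    have hDnn : 0 ≤ D := le_trans (by positivity) (hD 0)
    have hu : Summable (fun n : ℕ => D * (1/2 : ℝ)^n) :=
      (summable_geometric_of_lt_one (by norm_num) (by norm_num)).mul_left D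
    have key := hasDerivAt_tsum_of_isPreconnected (g := fun n z => c n / (n+1) * z^(n+1))
      (g' := fun n z => c n * z ^ n) hu (Metric.isOpen_ball (x := (0:ℂ)) (ε := R))
      (convex_ball (0:ℂ) R).isPreconnected
      (fun n z _ => ?_) (fun n z hz => ?_) (y₀ := 0) (by simpa using hR0) ?_
      (y := y) (by simp [mem_ball, hR])
    · rw [← (htay y).tsum_eq]
      exact key
    · have hp := hasDerivAt_pow (n+1) z
      have := hp.const_mul (c n / (n+1))
      convert this using 1
      · rfl
      rw [Nat.add_sub_cancel]
      push_cast
      have hne : ((n:ℂ) + 1) ≠ 0 := Nat.cast_add_one_ne_zero n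
      field_simp
    · have hz' : ‖z‖ ≤ R := le_of_lt (by simpa [mem_ball] using hz)
      calc ‖c n * z ^ n‖ = ‖c n‖ * ‖z‖^n := by simp [norm_mul, norm_pow]
        _ ≤ ‖c n‖ * R^n := by
            apply mul_le_mul_of_nonneg_left (pow_le_pow_left₀ (norm_nonneg _) hz' n) (norm_nonneg _)
        _ ≤ D * (1/2)^n := by
            have h3 := hD n
            have h2 : ‖c n‖ * (2*R)^n = ‖c n‖ * R^n * 2^n := by
              rw [show (2*R:ℝ) = R*2 by ring, mul_pow]; ring
            rw [h2] at h3
            rw [div_pow, one_pow, mul_one_div, le_div_iff₀ (by positivity : (0:ℝ) < 2^n)]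
            exact h3
    · apply summable_of_ne_finset_zero (s := ∅)
      intro n _
      simp


lemma deriv_bound_of_re_bound {H : ℂ → ℂ} (hH : Differentiable ℂ H)
    {c : ℂ} {R K : ℝ} (hR : 0 < R)
    (hK : ∀ w ∈ Metric.sphere c R, |(H w).re| ≤ K) :
    ‖deriv H c‖ ≤ 2 * K / R := by
  have hRne : (R:ℂ) ≠ 0 := by exact_mod_cast hR.ne'
  have hcont : Continuous fun θ : ℝ => H (circleMap c R θ) :=
    hH.continuous.comp (continuous_circleMap c R)
  -- Step 1: Cauchy formula for the derivative
  have hd : deriv H c = (2 * ↑Real.pi * I : ℂ)⁻¹ • ∮ z in C(c, R), (z - c) ^ (-2 : ℤ) • H z :=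
    by
      have h := (hH.diffContOnCl (s := ball c R)).deriv_eq_smul_circleIntegral hR
      have h2pi : (2 * ↑Real.pi * I : ℂ) ≠ 0 := by simp [Real.pi_ne_zero, I_ne_zero]
      rw [eq_inv_smul_iff₀ h2pi, ← h]
      congr 1
      ext z
      simp [zpow_neg]
  -- Step 2: the circle integral of H is zero
  have hzero : (∮ z in C(c, R), H z) = 0 :=
    Complex.circleIntegral_eq_zero_of_differentiable_on_off_countable hR.le Set.countable_empty
      hH.continuous.continuousOn (fun z _ => hH.differentiableAt)
  -- rewrite both circle integrals as interval integrals
  set J1 : ℂ := ∫ θ in (0:ℝ)..(2*Real.pi), Complex.exp (-(θ:ℂ) * I) * H (circleMap c R θ) with hJ1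
  set J2 : ℂ := ∫ θ in (0:ℝ)..(2*Real.pi), Complex.exp ((θ:ℂ) * I) * H (circleMap c R θ) with hJ2
  have hd1 : deriv H c = (2 * ↑Real.pi : ℂ)⁻¹ * (R:ℂ)⁻¹ * J1 := by
    rw [hd]
    have : (∮ z in C(c, R), (z - c) ^ (-2 : ℤ) • H z)
        = ∫ θ in (0:ℝ)..(2*Real.pi),
            (I * (R:ℂ)⁻¹) * (Complex.exp (-(θ:ℂ) * I) * H (circleMap c R θ)) := by
      simp only [circleIntegral, deriv_circleMap, circleMap_sub_center, smul_eq_mul]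
      apply intervalIntegral.integral_congr
      intro θ _
      have he : Complex.exp ((θ:ℂ) * I) ≠ 0 := Complex.exp_ne_zero _
      simp only [circleMap, zero_add]
      rw [zpow_neg, zpow_two, show -(θ:ℂ)*I = -((θ:ℂ)*I) by ring, Complex.exp_neg]
      field_simp
    rw [this, intervalIntegral.integral_const_mul, smul_eq_mul, ← mul_assoc]
    congr 1
    have hπ : ((Real.pi : ℂ)) ≠ 0 := by exact_mod_cast Real.pi_ne_zero
    field_simp
  have hJ2zero : J2 = 0 := by
    have : (∮ z in C(c, R), H z)
        = ((R:ℂ) * I) * ∫ θ in (0:ℝ)..(2*Real.pi),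
            Complex.exp ((θ:ℂ) * I) * H (circleMap c R θ) := by
      rw [← intervalIntegral.integral_const_mul]
      simp only [circleIntegral, deriv_circleMap, smul_eq_mul]
      apply intervalIntegral.integral_congr
      intro θ _
      simp only [circleMap, zero_add]
      ring
    rw [this] at hzero
    have : ((R:ℂ) * I) ≠ 0 := mul_ne_zero hRne I_ne_zero
    exact (mul_eq_zero.mp hzero).resolve_left this
  -- conjugate of J2 is zero
  have hconj : (∫ θ in (0:ℝ)..(2*Real.pi),
      Complex.exp (-(θ:ℂ) * I) * (starRingEnd ℂ) (H (circleMap c R θ))) = 0 := by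
    have hc1 : (∫ θ in (0:ℝ)..(2*Real.pi),
        (starRingEnd ℂ) (Complex.exp ((θ:ℂ) * I) * H (circleMap c R θ)))
        = (starRingEnd ℂ) J2 := by
      rw [hJ2]
      simp only [intervalIntegral]
      rw [map_sub, ← integral_conj, ← integral_conj]
    rw [hJ2zero, map_zero] at hc1
    rw [← hc1]
    apply intervalIntegral.integral_congr
    intro θ _
    show Complex.exp (-(θ:ℂ) * I) * (starRingEnd ℂ) (H (circleMap c R θ))
        = (starRingEnd ℂ) (Complex.exp ((θ:ℂ) * I) * H (circleMap c R θ))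
    rw [map_mul, ← Complex.exp_conj]
    congr 2
    simp [Complex.conj_ofReal]
  -- J1 equals the integral of twice the real part
  have hJ1re : J1 = ∫ θ in (0:ℝ)..(2*Real.pi),
      Complex.exp (-(θ:ℂ) * I) * (2 * ((H (circleMap c R θ)).re : ℂ)) := by
    have hi1 : IntervalIntegrable (fun θ : ℝ => Complex.exp (-(θ:ℂ) * I) * H (circleMap c R θ))
        MeasureTheory.volume 0 (2*Real.pi) := by
      apply Continuous.intervalIntegrable
      exact (Complex.continuous_exp.comp (by continuity)).mul hcont
    have hi2 : IntervalIntegrable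
        (fun θ : ℝ => Complex.exp (-(θ:ℂ) * I) * (starRingEnd ℂ) (H (circleMap c R θ)))
        MeasureTheory.volume 0 (2*Real.pi) := by
      apply Continuous.intervalIntegrable
      exact (Complex.continuous_exp.comp (by continuity)).mul (Complex.continuous_conj.comp hcont)
    rw [hJ1, ← add_zero (∫ θ in (0:ℝ)..(2*Real.pi),
      Complex.exp (-(θ:ℂ) * I) * H (circleMap c R θ)), ← hconj,
      ← intervalIntegral.integral_add hi1 hi2]
    apply intervalIntegral.integral_congr
    intro θ _
    show Complex.exp (-(θ:ℂ) * I) * H (circleMap c R θ)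
          + Complex.exp (-(θ:ℂ) * I) * (starRingEnd ℂ) (H (circleMap c R θ))
        = Complex.exp (-(θ:ℂ) * I) * (2 * ((H (circleMap c R θ)).re : ℂ))
    rw [← mul_add, Complex.add_conj]
    norm_num
  -- bound J1
  have hKnn : 0 ≤ K := by
    have : c + R ∈ Metric.sphere c R := by
      simp [Complex.dist_eq, abs_of_pos hR]
    exact le_trans (abs_nonneg _) (hK _ this)
  have hJ1bound : ‖J1‖ ≤ 2 * K * (2 * Real.pi) := by
    rw [hJ1re]
    have := intervalIntegral.norm_integral_le_of_norm_le_const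
      (C := 2 * K) (f := fun θ : ℝ => Complex.exp (-(θ:ℂ) * I) * (2 * ((H (circleMap c R θ)).re : ℂ)))
      (a := 0) (b := 2*Real.pi) ?_
    · calc ‖_‖ ≤ 2 * K * |2*Real.pi - 0| := this
        _ = 2 * K * (2 * Real.pi) := by
          rw [sub_zero, abs_of_pos (by positivity)]
    · intro x _
      have h1 : ‖Complex.exp (-(x:ℂ) * I)‖ = 1 := by
        rw [Complex.norm_exp]
        simp
      have h3 : ‖(2 * (((H (circleMap c R x)).re : ℝ) : ℂ))‖
          = 2 * |(H (circleMap c R x)).re| := by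
        rw [norm_mul, Complex.norm_real, Real.norm_eq_abs]
        norm_num
      rw [norm_mul, h1, one_mul, h3]
      have h2 := hK _ (circleMap_mem_sphere c hR.le x)
      linarith
  -- conclude
  have hn1 : ‖deriv H c‖ = (2*Real.pi)⁻¹ * R⁻¹ * ‖J1‖ := by
    rw [hd1, norm_mul, norm_mul, norm_inv, norm_inv]
    congr 2
    · rw [show ((2 : ℂ) * ↑Real.pi) = (((2*Real.pi : ℝ)) : ℂ) by push_cast; ring,
        Complex.norm_real, Real.norm_eq_abs, abs_of_pos (by positivity)]
    · rw [Complex.norm_real, Real.norm_eq_abs, abs_of_pos hR]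
  rw [hn1]
  have step : (2*Real.pi)⁻¹ * R⁻¹ * ‖J1‖ ≤ (2*Real.pi)⁻¹ * R⁻¹ * (2 * K * (2*Real.pi)) := by
    apply mul_le_mul_of_nonneg_left hJ1bound
    positivity
  refine le_trans step (le_of_eq ?_)
  field_simp


open Complex Metric


/-- Every unit of `E_exp(ℂ)` has the form `z ↦ e^{a + b z}`. -/
theorem units_of_Eexp (f : ℂ → ℂ) (hf : ExpType f)
    (hu : ∃ g : ℂ → ℂ, ExpType g ∧ ∀ z : ℂ, f z * g z = 1) :
    ∃ a b : ℂ, ∀ z : ℂ, f z = Complex.exp (a + b * z) := by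
  obtain ⟨g, hg, hfg⟩ := hu
  obtain ⟨hfd, C1, hC1, N1, M1, hM1, hb1⟩ := hf
  obtain ⟨hgd, C2, hC2, N2, M2, hM2, hb2⟩ := hg
  have hfne : ∀ z, f z ≠ 0 := by
    intro z hz
    have := hfg z
    rw [hz, zero_mul] at this
    exact zero_ne_one this
  have hgne : ∀ z, g z ≠ 0 := by
    intro z hz
    have := hfg z
    rw [hz, mul_zero] at this
    exact zero_ne_one this
  -- the logarithmic derivative φ = f' / f = f' * g is entire
  have hdf : Differentiable ℂ (deriv f) := by
    have h1 : AnalyticOnNhd ℂ f Set.univ :=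
      hfd.differentiableOn.analyticOnNhd isOpen_univ
    exact fun z => ((h1.deriv) z (Set.mem_univ z)).differentiableAt
  set φ : ℂ → ℂ := fun z => deriv f z * g z with hφdef
  have hφ : Differentiable ℂ φ := hdf.mul hgd
  obtain ⟨h, h00, hh⟩ := entire_exists_primitive hφ
  -- f = f 0 * exp h
  have hderzero : ∀ z, HasDerivAt (fun w => f w * Complex.exp (-h w)) 0 z := by
    intro z
    have h1 : HasDerivAt (fun w => Complex.exp (-h w)) (Complex.exp (-h z) * -(φ z)) z :=
      ((hh z).neg).cexp
    have h2 : HasDerivAt f (deriv f z) z := (hfd z).hasDerivAt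
    have h3 := h2.mul h1
    have h5 : deriv f z * Complex.exp (-h z) + f z * (Complex.exp (-h z) * -(φ z))
        = Complex.exp (-h z) * deriv f z * (1 - f z * g z) := by
      rw [hφdef]; ring
    rw [h5, hfg z, sub_self, mul_zero] at h3
    exact h3
  have hkey : ∀ z, f z * Complex.exp (-h z) = f 0 := by
    intro z
    have := is_const_of_deriv_eq_zero (𝕜 := ℂ)
      (f := fun w => f w * Complex.exp (-h w))
      (fun w => ((hderzero w).differentiableAt)) (fun w => (hderzero w).deriv) z 0
    simpa [h00] using this
  set H : ℂ → ℂ := fun z => h z + Complex.log (f 0) with hHdef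
  have hfH : ∀ z, f z = Complex.exp (H z) := by
    intro z
    have h1 := hkey z
    rw [Complex.exp_neg] at h1
    have h2 : Complex.exp (h z) ≠ 0 := Complex.exp_ne_zero _
    have h3 : f z = f 0 * Complex.exp (h z) := by
      field_simp at h1
      linear_combination h1
    rw [h3, hHdef, Complex.exp_add, Complex.exp_log (hfne 0)]
    ring
  have hHderiv : ∀ z, HasDerivAt H (φ z) z := fun z => (hh z).add_const _
  have hHd : Differentiable ℂ H := fun z => ((hHderiv z).differentiableAt)
  -- bound on |Re H|
  set A : ℝ := |Real.log C1| + |Real.log C2| + 1 with hA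
  set B : ℝ := (N1 : ℝ) + M1 + (N2 : ℝ) + M2 with hB
  have hBpos : 0 < B := by positivity
  have hApos : 0 < A := by positivity
  have hre : ∀ z, (H z).re = Real.log (‖f z‖) := by
    intro z
    rw [hfH z, Complex.norm_exp, Real.log_exp]
  have hlog_bound : ∀ (C : ℝ) (N : ℕ) (M : ℝ) (q : ℂ → ℂ), 0 < C → 0 < M →
      (∀ z, ‖q z‖ ≤ C * (1 + ‖z‖)^N * Real.exp (M * |z.im|)) →
      (∀ z, q z ≠ 0) →
      ∀ z, Real.log (‖q z‖) ≤ |Real.log C| + ((N:ℝ) + M) * ‖z‖ := by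
    intro C N M q hC hM hq hqne z
    have h0 : 0 < ‖q z‖ := norm_pos_iff.mpr (hqne z)
    have habs : 0 ≤ ‖z‖ := norm_nonneg z
    have hx1 : (0:ℝ) < 1 + ‖z‖ := by positivity
    have h1 : Real.log (‖q z‖)
        ≤ Real.log (C * (1 + ‖z‖)^N * Real.exp (M * |z.im|)) := by
      rw [Real.log_le_log_iff h0 (by positivity)]
      exact hq z
    rw [Real.log_mul (by positivity) (by positivity),
      Real.log_mul (by positivity) (by positivity),
      Real.log_exp, Real.log_pow] at h1
    have h2 : Real.log (1 + ‖z‖) ≤ ‖z‖ := by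
      have := Real.log_le_sub_one_of_pos hx1
      linarith
    have h3 : |z.im| ≤ ‖z‖ := Complex.abs_im_le_norm z
    have h4 : Real.log C ≤ |Real.log C| := le_abs_self _
    have h5 : (N:ℝ) * Real.log (1 + ‖z‖) ≤ (N:ℝ) * ‖z‖ :=
      mul_le_mul_of_nonneg_left h2 (Nat.cast_nonneg N)
    have h6 : M * |z.im| ≤ M * ‖z‖ := mul_le_mul_of_nonneg_left h3 hM.le
    calc Real.log (‖q z‖)
        ≤ Real.log C + (N:ℝ) * Real.log (1 + ‖z‖) + M * |z.im| := by linarith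
      _ ≤ |Real.log C| + ((N:ℝ) + M) * ‖z‖ := by nlinarith
  have hre_bound : ∀ z, |(H z).re| ≤ A + B * ‖z‖ := by
    intro z
    have habs : 0 ≤ ‖z‖ := norm_nonneg z
    rw [hre z, abs_le]
    constructor
    · -- lower bound via g
      have hmul : ‖f z‖ * ‖g z‖ = 1 := by
        rw [← norm_mul, hfg z, norm_one]
      have hgpos : 0 < ‖g z‖ := norm_pos_iff.mpr (hgne z)
      have hinv : Real.log (‖f z‖) = - Real.log (‖g z‖) := by
        have : ‖f z‖ = (‖g z‖)⁻¹ := by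
          field_simp
          linarith [hmul]
        rw [this, Real.log_inv]
      have hgb := hlog_bound C2 N2 M2 g hC2 hM2 hb2 hgne z
      rw [hinv]
      have hNM : ((N2:ℝ) + M2) * ‖z‖ ≤ B * ‖z‖ := by
        apply mul_le_mul_of_nonneg_right _ habs
        rw [hB]
        linarith [hM1.le, Nat.cast_nonneg' (α := ℝ) N1]
      have hAC : |Real.log C2| ≤ A := by
        rw [hA]
        linarith [abs_nonneg (Real.log C1)]
      linarith
    · have hfb := hlog_bound C1 N1 M1 f hC1 hM1 hb1 hfne z
      have hNM : ((N1:ℝ) + M1) * ‖z‖ ≤ B * ‖z‖ := by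
        apply mul_le_mul_of_nonneg_right _ habs
        rw [hB]
        linarith [hM2.le, Nat.cast_nonneg' (α := ℝ) N2]
      have hAC : |Real.log C1| ≤ A := by
        rw [hA]
        linarith [abs_nonneg (Real.log C2)]
      linarith
  -- the logarithmic derivative is bounded
  have hφbound : ∀ c : ℂ, ‖φ c‖ ≤ 2 * B := by
    intro c
    have hineq : ∀ R : ℝ, 0 < R →
        ‖φ c‖ ≤ 2 * (A + B * (‖c‖ + R)) / R := by
      intro R hR
      have hKb : ∀ w ∈ Metric.sphere c R, |(H w).re| ≤ A + B * (‖c‖ + R) := by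
        intro w hw
        have h1 := hre_bound w
        have h2 : ‖w‖ ≤ ‖c‖ + R := by
          have hw' : ‖w - c‖ = R := by
            simpa [Complex.dist_eq] using hw
          calc ‖w‖ = ‖c + (w - c)‖ := by ring_nf
            _ ≤ ‖c‖ + ‖w - c‖ := norm_add_le _ _
            _ = ‖c‖ + R := by rw [hw']
        have h3 : B * ‖w‖ ≤ B * (‖c‖ + R) :=
          mul_le_mul_of_nonneg_left h2 hBpos.le
        linarith
      have hbd := deriv_bound_of_re_bound hHd hR hKb
      rw [(hHderiv c).deriv] at hbd
      exact hbd
    have htend : Filter.Tendsto (fun R : ℝ => 2 * (A + B * (‖c‖ + R)) / R)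
        Filter.atTop (nhds (2 * B)) := by
      have h1 : (fun R : ℝ => (2*A + 2*B*‖c‖) / R + 2*B)
          =ᶠ[Filter.atTop] (fun R : ℝ => 2 * (A + B * (‖c‖ + R)) / R) := by
        filter_upwards [Filter.eventually_gt_atTop (0:ℝ)] with R hR0
        field_simp
        ring
      have h2 : Filter.Tendsto (fun R : ℝ => (2*A + 2*B*‖c‖) / R + 2*B)
          Filter.atTop (nhds (0 + 2*B)) :=
        (Filter.Tendsto.div_atTop tendsto_const_nhds Filter.tendsto_id).add tendsto_const_nhds
      rw [zero_add] at h2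
      exact Filter.Tendsto.congr' h1 h2
    refine ge_of_tendsto htend ?_
    filter_upwards [Filter.eventually_gt_atTop (0:ℝ)] with R hR0
    exact hineq R hR0
  -- Liouville: φ is constant
  have hbdd : Bornology.IsBounded (Set.range φ) := by
    rw [isBounded_iff_forall_norm_le]
    exact ⟨2*B, by rintro x ⟨c, rfl⟩; exact hφbound c⟩
  have hconst : ∀ z, φ z = φ 0 := fun z => hφ.apply_eq_apply_of_bounded hbdd z 0
  -- conclude
  refine ⟨H 0, φ 0, fun z => ?_⟩
  rw [hfH z]
  congr 1
  have hder0 : ∀ w, HasDerivAt (fun z => H z - φ 0 * z) 0 w := by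
    intro w
    have h1 := hHderiv w
    have h2 : HasDerivAt (fun z : ℂ => φ 0 * z) (φ 0) w := by
      simpa using (hasDerivAt_id w).const_mul (φ 0)
    have h3 := h1.sub h2
    rw [hconst w, sub_self] at h3
    exact h3
  have hc := is_const_of_deriv_eq_zero (𝕜 := ℂ) (f := fun z => H z - φ 0 * z)
    (fun w => (hder0 w).differentiableAt) (fun w => (hder0 w).deriv) z 0
  simp only [mul_zero, sub_zero] at hc
  have : H z = H 0 + φ 0 * z := by linear_combination hc
  rw [this]

end UnitsOfEexpProof
end

section
/- Let h : ℂ → ℂ be an entire function for which there exist constants A, B ≥ 0 such that |Re h(z)| ≤ A + B|z| for all z ∈ ℂ. Then h is a polynomial of degree at most 1; that is, there exists c ∈ ℂ such that h(z) = h(0) + c·z for all z ∈ ℂ. -/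
set_option maxHeartbeats 1000000

open Complex intervalIntegral Real

private lemma intervalIntegral_conj' (f : ℝ → ℂ) (a b : ℝ) :
    (∫ θ in a..b, (starRingEnd ℂ) (f θ)) = (starRingEnd ℂ) (∫ θ in a..b, f θ) := by
  simp only [intervalIntegral, ← integral_conj, map_sub]

private lemma cauchy_coeff_formula (h : ℂ → ℂ) (R : ℝ) (hR : 0 < R) (n : ℕ) :
    (cauchyPowerSeries h 0 R).coeff n
      = ((2 * π * R ^ n : ℝ) : ℂ)⁻¹ *
        ∫ θ in (0:ℝ)..(2*π), (Complex.exp (θ * Complex.I))⁻¹ ^ n * h (circleMap 0 R θ) := by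
  have key : (cauchyPowerSeries h 0 R).coeff n =
      (2 * ↑π * I : ℂ)⁻¹ • ∮ z in C(0, R), ((1:ℂ) / (z - 0)) ^ n • (z - 0)⁻¹ • h z :=
    cauchyPowerSeries_apply h 0 R n 1
  rw [key, circleIntegral]
  have hRne : (R : ℂ) ≠ 0 := ofReal_ne_zero.2 hR.ne'
  have step : ∀ θ : ℝ,
      deriv (circleMap 0 R) θ • (((1:ℂ) / (circleMap 0 R θ - 0)) ^ n •
        ((circleMap 0 R θ - 0)⁻¹ • h (circleMap 0 R θ)))
      = (I * ((R : ℂ) ^ n)⁻¹) * ((Complex.exp (θ * Complex.I))⁻¹ ^ n * h (circleMap 0 R θ)) := by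
    intro θ
    have he : Complex.exp (θ * Complex.I) ≠ 0 := Complex.exp_ne_zero _
    rw [deriv_circleMap]
    simp only [circleMap_zero, smul_eq_mul, sub_zero]
    field_simp
    ring_nf
    rw [← mul_pow, mul_inv_cancel₀ hRne, one_pow, one_mul]
  rw [intervalIntegral.integral_congr (fun θ _ => step θ)]
  rw [intervalIntegral.integral_const_mul]
  have hpi : (π : ℂ) ≠ 0 := ofReal_ne_zero.2 pi_ne_zero
  push_cast
  rw [smul_eq_mul]
  field_simp

private lemma cauchy_vanish (h : ℂ → ℂ) (hh : Differentiable ℂ h) (R : ℝ) (hR : 0 < R) (n : ℕ) :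
    ∫ θ in (0:ℝ)..(2*π), (Complex.exp (θ * Complex.I)) ^ (n+1) * h (circleMap 0 R θ) = 0 := by
  have hg : Differentiable ℂ (fun z : ℂ => z ^ n * h z) :=
    (differentiable_pow n).mul hh
  have hzero : (∮ z in C(0, R), z ^ n * h z) = 0 :=
    Complex.circleIntegral_eq_zero_of_differentiable_on_off_countable hR.le Set.countable_empty
      hg.continuous.continuousOn (fun z _ => hg z)
  rw [circleIntegral] at hzero
  have step : ∀ θ : ℝ,
      deriv (circleMap 0 R) θ • ((circleMap 0 R θ) ^ n * h (circleMap 0 R θ))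
      = (I * (R : ℂ) ^ (n+1)) * ((Complex.exp (θ * Complex.I)) ^ (n+1) * h (circleMap 0 R θ)) := by
    intro θ
    rw [deriv_circleMap]
    simp only [circleMap_zero, smul_eq_mul]
    ring
  rw [intervalIntegral.integral_congr (fun θ _ => step θ), intervalIntegral.integral_const_mul,
    mul_eq_zero] at hzero
  rcases hzero with h1 | h2
  · exact absurd h1 (by simp [I_ne_zero, pow_eq_zero_iff, ofReal_ne_zero, hR.ne'])
  · exact h2

private lemma cauchy_coeff_bound (h : ℂ → ℂ) (hh : Differentiable ℂ h)
    (A B : ℝ) (hre : ∀ z : ℂ, |(h z).re| ≤ A + B * ‖z‖)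
    (R : ℝ) (hR : 0 < R) (m : ℕ) :
    ‖(cauchyPowerSeries h 0 R).coeff (m+1)‖ ≤ 2 * (A + B * R) / R ^ (m+1) := by
  set n := m + 1
  have hconj : ∫ θ in (0:ℝ)..(2*π),
      (Complex.exp (θ * Complex.I))⁻¹ ^ n * (starRingEnd ℂ) (h (circleMap 0 R θ)) = 0 := by
    have := cauchy_vanish h hh R hR m
    have key : ∀ θ : ℝ,
        (Complex.exp (θ * Complex.I))⁻¹ ^ n * (starRingEnd ℂ) (h (circleMap 0 R θ))
        = (starRingEnd ℂ) ((Complex.exp (θ * Complex.I)) ^ n * h (circleMap 0 R θ)) := by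
      intro θ
      rw [map_mul, map_pow]
      congr 2
      rw [← Complex.exp_conj]
      rw [← Complex.exp_neg]
      congr 1
      simp [Complex.conj_ofReal]
    rw [intervalIntegral.integral_congr (fun θ _ => key θ), intervalIntegral_conj', this, map_zero]
  have hcont1 : Continuous fun θ : ℝ => (Complex.exp (θ * Complex.I))⁻¹ ^ n := by
    apply Continuous.pow
    apply Continuous.inv₀
    · exact Complex.continuous_exp.comp ((Complex.continuous_ofReal).mul continuous_const)
    · intro θ; exact Complex.exp_ne_zero _
  have hcont2 : Continuous fun θ : ℝ => h (circleMap 0 R θ) :=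
    hh.continuous.comp (continuous_circleMap 0 R)
  have hsum : (∫ θ in (0:ℝ)..(2*π), (Complex.exp (θ * Complex.I))⁻¹ ^ n * h (circleMap 0 R θ))
      = ∫ θ in (0:ℝ)..(2*π), (Complex.exp (θ * Complex.I))⁻¹ ^ n *
          (2 * ((h (circleMap 0 R θ)).re : ℂ)) := by
    have hi1 : IntervalIntegrable
        (fun θ : ℝ => (Complex.exp (θ * Complex.I))⁻¹ ^ n * h (circleMap 0 R θ))
        MeasureTheory.volume 0 (2*π) := (hcont1.mul hcont2).intervalIntegrable _ _
    have hi2 : IntervalIntegrable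
        (fun θ : ℝ => (Complex.exp (θ * Complex.I))⁻¹ ^ n *
          (starRingEnd ℂ) (h (circleMap 0 R θ)))
        MeasureTheory.volume 0 (2*π) :=
      (hcont1.mul (Complex.continuous_conj.comp hcont2)).intervalIntegrable _ _
    have hadd := intervalIntegral.integral_add hi1 hi2
    rw [hconj, add_zero] at hadd
    rw [← hadd]
    apply intervalIntegral.integral_congr
    intro θ _
    simp only
    rw [← mul_add, Complex.add_conj]
    push_cast
    ring
  have hbound : ‖∫ θ in (0:ℝ)..(2*π), (Complex.exp (θ * Complex.I))⁻¹ ^ n *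
      (2 * ((h (circleMap 0 R θ)).re : ℂ))‖ ≤ (2 * (A + B * R)) * |2*π - 0| := by
    apply intervalIntegral.norm_integral_le_of_norm_le_const
    intro θ _
    rw [norm_mul, norm_pow, norm_inv]
    have habs : ‖Complex.exp (↑θ * I)‖ = 1 := by
      rw [Complex.norm_exp_ofReal_mul_I]
    rw [habs]
    simp only [inv_one, one_pow, one_mul, norm_mul]
    have : ‖((h (circleMap 0 R θ)).re : ℂ)‖ = |(h (circleMap 0 R θ)).re| := by
      rw [Complex.norm_real, Real.norm_eq_abs]
    rw [this]
    have := hre (circleMap 0 R θ)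
    have habs2 : ‖circleMap 0 R θ‖ = R := by
      rw [norm_circleMap_zero, abs_of_pos hR]
    rw [habs2] at this
    calc ‖(2:ℂ)‖ * |(h (circleMap 0 R θ)).re| = 2 * |(h (circleMap 0 R θ)).re| := by norm_num
    _ ≤ 2 * (A + B * R) := by linarith
  rw [cauchy_coeff_formula h R hR n, hsum]
  rw [norm_mul]
  have hns : ‖((2 * π * R ^ n : ℝ) : ℂ)⁻¹‖ = (2 * π * R ^ n)⁻¹ := by
    rw [norm_inv, Complex.norm_real, Real.norm_eq_abs, abs_of_pos]
    positivity
  rw [hns]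
  have h2pi : |2*π - 0| = 2*π := by
    rw [sub_zero, abs_of_pos Real.two_pi_pos]
  rw [h2pi] at hbound
  calc (2 * π * R ^ n)⁻¹ * ‖∫ θ in (0:ℝ)..(2*π), (Complex.exp (θ * Complex.I))⁻¹ ^ n *
      (2 * ((h (circleMap 0 R θ)).re : ℂ))‖
      ≤ (2 * π * R ^ n)⁻¹ * ((2 * (A + B * R)) * (2*π)) := by
        apply mul_le_mul_of_nonneg_left hbound
        positivity
    _ = 2 * (A + B * R) / R ^ n := by
        field_simp

/-- An entire function whose real part grows at most linearly is a polynomial of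
degree at most one. -/
theorem entire_linear_re_growth (h : ℂ → ℂ) (hh : Differentiable ℂ h)
    (A B : ℝ) (hA : 0 ≤ A) (hB : 0 ≤ B)
    (hre : ∀ z : ℂ, |(h z).re| ≤ A + B * ‖z‖) :
    ∃ c : ℂ, ∀ z : ℂ, h z = h 0 + c * z := by
  have hp : HasFPowerSeriesOnBall h (cauchyPowerSeries h 0 (1:ℝ)) 0 ⊤ := by
    have hp' := hh.hasFPowerSeriesOnBall (R := 1) 0 one_pos
    rwa [NNReal.coe_one] at hp'
  set p := cauchyPowerSeries h 0 (1:ℝ) with hp_def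
  -- coefficients of index ≥ 2 vanish
  have hcoeff : ∀ m : ℕ, p.coeff (m + 2) = 0 := by
    intro m
    have hbnd : ∀ R : ℝ, 1 ≤ R → ‖p.coeff (m + 2)‖ ≤ (2*A + 2*B) / R := by
      intro R hR1
      have hR : (0:ℝ) < R := lt_of_lt_of_le one_pos hR1
      have hq : HasFPowerSeriesOnBall h (cauchyPowerSeries h 0 R) 0 ⊤ := by
        have hq' := hh.hasFPowerSeriesOnBall 0 (R := R.toNNReal) (Real.toNNReal_pos.mpr hR)
        rwa [Real.coe_toNNReal R hR.le] at hq'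

      have hpq : p = cauchyPowerSeries h 0 R :=
        hp.hasFPowerSeriesAt.eq_formalMultilinearSeries hq.hasFPowerSeriesAt
      rw [hpq]
      have := cauchy_coeff_bound h hh A B hre R hR (m+1)
      refine this.trans ?_
      have hRpow : R ^ 2 ≤ R ^ (m + 1 + 1) := by
        apply pow_le_pow_right₀ hR1
        omega
      have h1 : 2 * (A + B * R) / R ^ (m+1+1) ≤ 2 * (A + B * R) / R ^ 2 := by
        apply div_le_div_of_nonneg_left _ (by positivity) hRpow
        positivity
      refine h1.trans ?_
      rw [div_le_div_iff₀ (by positivity) hR]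
      have hRle : R ≤ R ^ 2 := by nlinarith
      nlinarith [mul_nonneg hA hR.le, mul_nonneg hB (mul_nonneg hR.le hR.le)]
    have hlim : Filter.Tendsto (fun R : ℝ => (2*A + 2*B) / R) Filter.atTop (nhds 0) :=
      tendsto_const_nhds.div_atTop Filter.tendsto_id
    have : ‖p.coeff (m + 2)‖ ≤ 0 := by
      apply ge_of_tendsto hlim
      filter_upwards [Filter.eventually_ge_atTop 1] with R hR using hbnd R hR
    simpa using norm_le_zero_iff.mp this
  -- sum formula
  refine ⟨p.coeff 1, fun z => ?_⟩
  have hz : z ∈ Metric.eball (0:ℂ) ⊤ := by simp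
  have hsum := hp.hasSum (y := z) (by simpa using hz)
  simp only [zero_add] at hsum
  have hsum' : HasSum (fun n : ℕ => z ^ n • p.coeff n) (h z) := by
    simpa only [FormalMultilinearSeries.apply_eq_pow_smul_coeff] using hsum
  have hfin : HasSum (fun n : ℕ => z ^ n • p.coeff n)
      (∑ n ∈ Finset.range 2, z ^ n • p.coeff n) := by
    apply hasSum_sum_of_ne_finset_zero
    intro n hn
    rw [Finset.mem_range, not_lt] at hn
    obtain ⟨m, rfl⟩ : ∃ m, n = m + 2 := ⟨n - 2, by omega⟩
    rw [hcoeff m, smul_zero]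
  have hz_eq : h z = ∑ n ∈ Finset.range 2, z ^ n • p.coeff n := hsum'.unique hfin
  have h0_eq : h 0 = ∑ n ∈ Finset.range 2, (0:ℂ) ^ n • p.coeff n := by
    have hsum0 := hp.hasSum (y := (0:ℂ)) (by simp)
    simp only [zero_add] at hsum0
    have hsum0' : HasSum (fun n : ℕ => (0:ℂ) ^ n • p.coeff n) (h 0) := by
      simpa only [FormalMultilinearSeries.apply_eq_pow_smul_coeff] using hsum0
    have hfin0 : HasSum (fun n : ℕ => (0:ℂ) ^ n • p.coeff n)
        (∑ n ∈ Finset.range 2, (0:ℂ) ^ n • p.coeff n) := by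
      apply hasSum_sum_of_ne_finset_zero
      intro n hn
      rw [Finset.mem_range, not_lt] at hn
      obtain ⟨m, rfl⟩ : ∃ m, n = m + 2 := ⟨n - 2, by omega⟩
      rw [hcoeff m, smul_zero]
    exact hsum0'.unique hfin0
  rw [hz_eq, h0_eq]
  simp [Finset.sum_range_succ, smul_eq_mul]
  ring
end

section
/- The pair (z − 1, z³) is unimodular in E_exp(ℂ) but is not reducible: there exist p, q ∈ E_exp(ℂ) with p(z)(z − 1) + q(z)z³ = 1 for all z ∈ ℂ, yet for every h ∈ E_exp(ℂ) the function z ↦ z − 1 + h(z)z³ is not a unit of E_exp(ℂ), i.e. there is no g ∈ E_exp(ℂ) with (z − 1 + h(z)z³)·g(z) = 1 for all z ∈ ℂ. Consequently the Bass stable rank of E_exp(ℂ) is at least 2. -/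
open Complex Metric intervalIntegral Set

lemma my_exists_primitive {u : ℂ → ℂ} (hu : Differentiable ℂ u) :
    ∃ Ψ : ℂ → ℂ, Ψ 0 = 0 ∧ ∀ z, HasDerivAt Ψ (u z) z := by
  refine ⟨fun z => ∫ t in (0:ℝ)..1, z * u ((t : ℂ) * z), by simp, fun z₀ => ?_⟩
  have hud : Differentiable ℂ (deriv u) :=
    differentiableOn_univ.mp ((analyticOnNhd_univ_iff_differentiable.2 hu).deriv).differentiableOn
  set R : ℝ := ‖z₀‖ + 1 with hR
  have hRpos : (0:ℝ) < R := by positivity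
  obtain ⟨B₁, hB₁⟩ := (isCompact_closedBall (0:ℂ) R).exists_bound_of_continuousOn
    hu.continuous.continuousOn
  obtain ⟨B₂, hB₂⟩ := (isCompact_closedBall (0:ℂ) R).exists_bound_of_continuousOn
    hud.continuous.continuousOn
  have huc : Continuous u := hu.continuous
  have hudc : Continuous (deriv u) := hud.continuous
  have key := intervalIntegral.hasDerivAt_integral_of_dominated_loc_of_deriv_le
    (F := fun (z : ℂ) (t : ℝ) => z * u ((t : ℂ) * z))
    (F' := fun (z : ℂ) (t : ℝ) => u ((t : ℂ) * z) + z * (deriv u ((t : ℂ) * z) * (t : ℂ)))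
    (x₀ := z₀) (a := (0:ℝ)) (b := 1) (μ := MeasureTheory.volume)
    (bound := fun _ => |B₁| + R * |B₂|) (Metric.ball_mem_nhds z₀ one_pos) ?_ ?_ ?_ ?_ ?_ ?_
  · refine key.2.congr_deriv ?_
    have hderiv : ∀ t ∈ uIcc (0:ℝ) 1,
        HasDerivAt (fun s : ℝ => (s : ℂ) * u ((s : ℂ) * z₀))
          (u ((t : ℂ) * z₀) + z₀ * (deriv u ((t : ℂ) * z₀) * (t : ℂ))) t := by
      intro t _
      have h1 : HasDerivAt (fun w : ℂ => w * u (w * z₀))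
          (1 * u ((t:ℂ) * z₀) + (t:ℂ) * (deriv u ((t:ℂ) * z₀) * z₀)) ((t : ℂ)) := by
        exact (hasDerivAt_id _).mul
          ((hu.differentiableAt.hasDerivAt.comp _ (hasDerivAt_mul_const z₀)))
      have := h1.comp_ofReal
      convert this using 1
      ring
    have hcont : IntervalIntegrable
        (fun t : ℝ => u ((t : ℂ) * z₀) + z₀ * (deriv u ((t : ℂ) * z₀) * (t : ℂ)))
        MeasureTheory.volume 0 1 := by
      apply Continuous.intervalIntegrable
      fun_prop
    have := intervalIntegral.integral_eq_sub_of_hasDerivAt hderiv hcont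
    simp only [Complex.ofReal_one, Complex.ofReal_zero, one_mul, zero_mul] at this
    rw [this]
    simp
  · filter_upwards with x
    apply Continuous.aestronglyMeasurable
    fun_prop
  · apply Continuous.intervalIntegrable; fun_prop
  · apply Continuous.aestronglyMeasurable; fun_prop
  · filter_upwards with t
    intro ht x hx
    have htt : t ∈ Set.Ioc (0:ℝ) 1 := by
      simpa [Set.uIoc_of_le (zero_le_one : (0:ℝ) ≤ 1)] using ht
    have ht0 : 0 ≤ t := le_of_lt htt.1
    have ht1 : t ≤ 1 := htt.2
    have hxR : ‖x‖ ≤ R := by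
      have := mem_ball_iff_norm.mp hx
      have h2 : ‖x - z₀‖ < 1 := this
      calc ‖x‖ = ‖z₀ + (x - z₀)‖ := by ring_nf
        _ ≤ ‖z₀‖ + ‖x - z₀‖ := norm_add_le _ _
        _ ≤ ‖z₀‖ + 1 := by linarith
    have htx : (t : ℂ) * x ∈ closedBall (0:ℂ) R := by
      simp only [mem_closedBall, dist_zero_right, norm_mul,
        Complex.norm_real, Real.norm_eq_abs]
      calc |t| * ‖x‖ ≤ 1 * R := by
            apply mul_le_mul (by rwa [_root_.abs_of_nonneg ht0]) hxR (norm_nonneg _) zero_le_one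
        _ = R := one_mul R
    calc ‖u ((t : ℂ) * x) + x * (deriv u ((t : ℂ) * x) * (t : ℂ))‖
        ≤ ‖u ((t : ℂ) * x)‖ + ‖x * (deriv u ((t : ℂ) * x) * (t : ℂ))‖ := norm_add_le _ _
      _ ≤ |B₁| + R * |B₂| := by
          gcongr
          · exact le_trans (hB₁ _ htx) (le_abs_self _)
          · rw [norm_mul, norm_mul]
            have h1 : ‖x‖ ≤ R := hxR
            have h2 : ‖deriv u ((t:ℂ)*x)‖ ≤ |B₂| := le_trans (hB₂ _ htx) (le_abs_self _)
            have h3 : ‖(t:ℂ)‖ ≤ 1 := by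
              simp only [Complex.norm_real, Real.norm_eq_abs]
              rwa [_root_.abs_of_nonneg ht0]
            calc ‖x‖ * (‖deriv u ((t:ℂ)*x)‖ * ‖(t:ℂ)‖) ≤ R * (|B₂| * 1) := by
                  have hx0 : (0:ℝ) ≤ ‖x‖ := norm_nonneg _
                  have hd0 : (0:ℝ) ≤ ‖deriv u ((t:ℂ)*x)‖ := norm_nonneg _
                  have ht0' : (0:ℝ) ≤ ‖(t:ℂ)‖ := norm_nonneg _
                  have hB2a : (0:ℝ) ≤ |B₂| := abs_nonneg _
                  nlinarith [mul_le_mul h2 h3 ht0' hB2a, mul_le_mul h1 (le_refl (‖deriv u ((t:ℂ)*x)‖ * ‖(t:ℂ)‖)) (mul_nonneg hd0 ht0') (le_trans hx0 h1)]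
              _ = R * |B₂| := by ring
  · apply Continuous.intervalIntegrable; fun_prop
  · filter_upwards with t
    intro ht x hx
    have h1 : HasDerivAt (fun w : ℂ => w * u (w * ((t:ℂ))))
        (1 * u (x * (t:ℂ)) + x * (deriv u (x * (t:ℂ)) * (t:ℂ))) x :=
      (hasDerivAt_id _).mul
        ((hu.differentiableAt.hasDerivAt.comp _ (hasDerivAt_mul_const ((t:ℂ)))))
    have h2 : HasDerivAt (fun w : ℂ => w * u ((t:ℂ) * w))
        (u ((t:ℂ) * x) + x * (deriv u ((t:ℂ) * x) * (t:ℂ))) x := by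
      simp only [mul_comm (t:ℂ)] at *
      simpa using h1
    exact h2

lemma my_exists_log {f : ℂ → ℂ} (hf : Differentiable ℂ f) (h0 : ∀ z, f z ≠ 0) :
    ∃ φ : ℂ → ℂ, Differentiable ℂ φ ∧ ∀ z, Complex.exp (φ z) = f z := by
  have hd : Differentiable ℂ (deriv f) :=
    differentiableOn_univ.mp ((analyticOnNhd_univ_iff_differentiable.2 hf).deriv).differentiableOn
  have hu : Differentiable ℂ (fun z => deriv f z / f z) := hd.div hf h0
  obtain ⟨Ψ, hΨ0, hΨ⟩ := my_exists_primitive hu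
  have hΨd : Differentiable ℂ Ψ := fun z => (hΨ z).differentiableAt
  refine ⟨fun z => Ψ z + Complex.log (f 0), hΨd.add_const _, fun z => ?_⟩
  have hG : ∀ w, HasDerivAt (fun z => f z * Complex.exp (-Ψ z))
      (deriv f w * Complex.exp (-Ψ w) + f w * (Complex.exp (-Ψ w) * (-(deriv f w / f w)))) w := by
    intro w
    exact (hf.differentiableAt.hasDerivAt).mul ((hΨ w).neg.cexp)
  have hG0 : ∀ w, deriv (fun z => f z * Complex.exp (-Ψ z)) w = 0 := by
    intro w
    rw [(hG w).deriv]
    have hfw := h0 w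
    field_simp
    ring
  have hconst : ∀ w, f w * Complex.exp (-Ψ w) = f 0 * Complex.exp (-Ψ 0) :=
    fun w => is_const_of_deriv_eq_zero (fun z => ((hG z).differentiableAt)) hG0 w 0
  have := hconst z
  rw [hΨ0, neg_zero, Complex.exp_zero, mul_one] at this
  rw [Complex.exp_add, Complex.exp_log (h0 0)]
  calc Complex.exp (Ψ z) * f 0 = Complex.exp (Ψ z) * (f z * Complex.exp (-Ψ z)) := by rw [this]
    _ = f z * (Complex.exp (Ψ z) * Complex.exp (-Ψ z)) := by ring
    _ = f z := by rw [← Complex.exp_add]; simp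

lemma my_conj_int_zero {φ : ℂ → ℂ} (hφ : Differentiable ℂ φ) (z : ℂ) {R : ℝ} (hR : 0 < R) :
    (∮ w in C(z, R), (w - z) ^ (-2 : ℤ) • ((starRingEnd ℂ) (φ w))) = 0 := by
  set G : ℝ → ℂ := fun θ => circleMap 0 R θ * φ (circleMap z R θ) with hG
  have hGcont : Continuous G := by
    apply Continuous.mul
    · exact (continuous_circleMap 0 R)
    · exact hφ.continuous.comp (continuous_circleMap z R)
  have hO : (∮ w in C(z, R), φ w) = 0 :=
    circleIntegral_eq_zero_of_differentiable_on_off_countable hR.le Set.countable_empty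
      hφ.continuous.continuousOn (fun w _ => hφ.differentiableAt)
  have hO' : (I : ℂ) * ∫ θ in (0:ℝ)..(2*Real.pi), G θ = 0 := by
    rw [← intervalIntegral.integral_const_mul]
    rw [circleIntegral] at hO
    simp only [deriv_circleMap, smul_eq_mul] at hO
    rw [← hO]
    congr 1
    funext θ
    simp only [hG]
    ring
  have hK : (∫ θ in (0:ℝ)..(2*Real.pi), G θ) = 0 := by
    rcases mul_eq_zero.mp hO' with h | h
    · exact absurd h I_ne_zero
    · exact h
  have hconjint : (∫ θ in (0:ℝ)..(2*Real.pi), (starRingEnd ℂ) (G θ)) = 0 := by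
    have hint : IntervalIntegrable G MeasureTheory.volume 0 (2*Real.pi) :=
      hGcont.intervalIntegrable _ _
    have := Complex.conjCLE.toContinuousLinearMap.intervalIntegral_comp_comm hint
    simp only [ContinuousLinearEquiv.coe_coe, Complex.conjCLE_apply] at this
    rw [this, hK, map_zero]
  rw [circleIntegral]
  simp only [deriv_circleMap, smul_eq_mul]
  have hpt : ∀ θ : ℝ, circleMap 0 R θ * I * ((circleMap z R θ - z) ^ (-2 : ℤ) *
      (starRingEnd ℂ) (φ (circleMap z R θ)))
      = (I * (((R:ℝ):ℂ)^2)⁻¹) * (starRingEnd ℂ) (G θ) := by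
    intro θ
    have hc : circleMap z R θ - z = circleMap 0 R θ := circleMap_sub_center _ _ _
    have hcne : circleMap 0 R θ ≠ 0 := circleMap_ne_center hR.ne'
    have habs : (circleMap 0 R θ) * (starRingEnd ℂ) (circleMap 0 R θ) = ((R:ℝ):ℂ)^2 := by
      rw [Complex.mul_conj, Complex.normSq_eq_norm_sq, norm_circleMap_zero, _root_.abs_of_pos hR]
      norm_cast
    have hRne : (((R:ℝ):ℂ))^2 ≠ 0 :=
      pow_ne_zero 2 (Complex.ofReal_ne_zero.mpr hR.ne')
    rw [hc, zpow_neg, map_mul]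
    rw [show ((circleMap 0 R θ) ^ (2:ℤ)) = circleMap 0 R θ * circleMap 0 R θ by
      rw [zpow_two]]
    have hcc : (starRingEnd ℂ) (circleMap 0 R θ) ≠ 0 := by simpa using hcne
    rw [← habs]
    field_simp
  calc (∫ θ in (0:ℝ)..(2*Real.pi), circleMap 0 R θ * I * ((circleMap z R θ - z) ^ (-2 : ℤ) *
          (starRingEnd ℂ) (φ (circleMap z R θ))))
      = ∫ θ in (0:ℝ)..(2*Real.pi), (I * (((R:ℝ):ℂ)^2)⁻¹) * (starRingEnd ℂ) (G θ) := by
        apply intervalIntegral.integral_congr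
        intro θ _
        exact hpt θ
    _ = (I * (((R:ℝ):ℂ)^2)⁻¹) * ∫ θ in (0:ℝ)..(2*Real.pi), (starRingEnd ℂ) (G θ) := by
        rw [intervalIntegral.integral_const_mul]
    _ = 0 := by rw [hconjint, mul_zero]

lemma my_linear_of_re_bound {φ : ℂ → ℂ} (hφ : Differentiable ℂ φ) {K : ℝ}
    (hK : ∀ z, |(φ z).re| ≤ K * (1 + ‖z‖)) :
    ∀ z, φ z = φ 0 + deriv φ 0 * z := by
  have hKnn : 0 ≤ K := by
    have := (abs_nonneg ((φ 0).re)).trans (hK 0)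
    simpa using this
  -- bound the derivative everywhere
  have hbdd : ∀ z : ℂ, ‖deriv φ z‖ ≤ 4 * K := by
    intro z
    set R : ℝ := 1 + ‖z‖ with hRdef
    have hR : 0 < R := by positivity
    have h1 : deriv φ z = (2 * Real.pi * I : ℂ)⁻¹ •
        ∮ w in C(z, R), (w - z) ^ (-2 : ℤ) • φ w :=
      by
        have h := (hφ.diffContOnCl (s := ball z R)).deriv_eq_smul_circleIntegral hR
        have he : (fun w => (w - z) ^ (-2 : ℤ) • φ w) = fun w => (1 / (w - z) ^ 2) • φ w := by
          funext w; simp [zpow_neg, one_div]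
        rw [he, h, smul_smul, inv_mul_cancel₀ (by simp [Real.pi_ne_zero, I_ne_zero]), one_smul]
    have h2 := my_conj_int_zero hφ z hR
    -- rewrite integrand: φ w = 2*re - conj
    have hsplit : (fun w => (w - z) ^ (-2 : ℤ) • φ w) = fun w =>
        ((w - z) ^ (-2 : ℤ) • ((2 * ((φ w).re : ℂ)))) -
        ((w - z) ^ (-2 : ℤ) • ((starRingEnd ℂ) (φ w))) := by
      funext w
      rw [← smul_sub]
      congr 1
      have := Complex.add_conj (φ w)
      push_cast at this ⊢
      linear_combination this
    have hcont1 : ContinuousOn (fun w => (w - z) ^ (-2 : ℤ) • ((2 * ((φ w).re : ℂ))))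
        (sphere z R) := by
      apply ContinuousOn.fun_smul
      · apply ContinuousOn.zpow₀
        · exact (continuous_id.sub continuous_const).continuousOn
        · intro w hw
          left
          rw [mem_sphere_iff_norm] at hw
          intro hc
          rw [hc] at hw
          simp at hw
          exact hR.ne' hw.symm
      · exact (continuous_const.mul
          (Complex.continuous_ofReal.comp (Complex.continuous_re.comp hφ.continuous))).continuousOn
    have hcont2 : ContinuousOn (fun w => (w - z) ^ (-2 : ℤ) • ((starRingEnd ℂ) (φ w)))
        (sphere z R) := by
      apply ContinuousOn.fun_smul
      · apply ContinuousOn.zpow₀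
        · exact (continuous_id.sub continuous_const).continuousOn
        · intro w hw
          left
          rw [mem_sphere_iff_norm] at hw
          intro hc
          rw [hc] at hw
          simp at hw
          exact hR.ne' hw.symm
      · exact (Complex.continuous_conj.comp hφ.continuous).continuousOn
    have h3 : (∮ w in C(z, R), (w - z) ^ (-2 : ℤ) • φ w)
        = ∮ w in C(z, R), (w - z) ^ (-2 : ℤ) • ((2 * ((φ w).re : ℂ))) := by
      rw [hsplit, circleIntegral.integral_sub (hcont1.circleIntegrable hR.le)
        (hcont2.circleIntegrable hR.le), h2, sub_zero]
    rw [h1, h3]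
    have hbound : ∀ w ∈ sphere z R, ‖(w - z) ^ (-2 : ℤ) • ((2 * ((φ w).re : ℂ)))‖
        ≤ 4 * K / R := by
      intro w hw
      rw [mem_sphere_iff_norm] at hw
      rw [norm_smul]
      have h4 : ‖(w - z) ^ (-2 : ℤ)‖ = R ^ (-2 : ℤ) := by
        rw [norm_zpow, hw]
      rw [h4]
      have h5 : ‖(2 * ((φ w).re : ℂ))‖ = 2 * |(φ w).re| := by
        rw [norm_mul]
        simp
      rw [h5]
      have h6 : ‖w‖ ≤ ‖z‖ + R := by
        calc ‖w‖ = ‖z + (w - z)‖ := by ring_nf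
          _ ≤ ‖z‖ + ‖w - z‖ := norm_add_le _ _
          _ = ‖z‖ + R := by rw [show ‖w - z‖ = R from hw]
      have h7 : |(φ w).re| ≤ K * (2 * R) := by
        calc |(φ w).re| ≤ K * (1 + ‖w‖) := hK w
          _ ≤ K * (1 + (‖z‖ + R)) := by
              apply mul_le_mul_of_nonneg_left _ hKnn
              linarith
          _ = K * (2 * R) := by rw [hRdef]; ring
      calc R ^ (-2:ℤ) * (2 * |(φ w).re|) ≤ R ^ (-2:ℤ) * (2 * (K * (2 * R))) := by
            apply mul_le_mul_of_nonneg_left _ (by positivity)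
            linarith
        _ = 4 * K / R := by
            rw [zpow_neg, zpow_two]
            field_simp
            ring
    have h8 := circleIntegral.norm_integral_le_of_norm_le_const hR.le hbound
    rw [norm_smul]
    have h9 : ‖(2 * Real.pi * I : ℂ)⁻¹‖ = (2 * Real.pi)⁻¹ := by
      rw [norm_inv]
      congr 1
      simp only [norm_mul, Complex.norm_I, Complex.norm_two,
        Complex.norm_real, Real.norm_eq_abs, mul_one]
      rw [_root_.abs_of_pos Real.pi_pos]
    rw [h9]
    calc (2 * Real.pi)⁻¹ * ‖∮ w in C(z, R), (w - z) ^ (-2 : ℤ) • ((2 * ((φ w).re : ℂ)))‖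
        ≤ (2 * Real.pi)⁻¹ * (2 * Real.pi * R * (4 * K / R)) := by
          apply mul_le_mul_of_nonneg_left h8 (by positivity)
      _ = 4 * K := by field_simp
  -- Liouville
  have hder : Differentiable ℂ (deriv φ) :=
    differentiableOn_univ.mp ((analyticOnNhd_univ_iff_differentiable.2 hφ).deriv).differentiableOn
  have hconstd : ∀ z : ℂ, deriv φ z = deriv φ 0 := by
    intro z
    apply hder.apply_eq_apply_of_bounded
    rw [Metric.isBounded_iff_subset_closedBall 0]
    exact ⟨4 * K, by rintro w ⟨x, rfl⟩; simpa [dist_eq_norm] using hbdd x⟩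
  -- integrate
  intro z
  have hψ : ∀ w : ℂ, HasDerivAt (fun x => φ x - deriv φ 0 * x) 0 w := by
    intro w
    have h1 : HasDerivAt φ (deriv φ w) w := hφ.differentiableAt.hasDerivAt
    have h2 : HasDerivAt (fun x : ℂ => deriv φ 0 * x) (deriv φ 0) w := by
      simpa using (hasDerivAt_id w).const_mul (deriv φ 0)
    have := h1.sub h2
    rwa [hconstd w, sub_self] at this
  have hconst : ∀ w : ℂ, φ w - deriv φ 0 * w = φ 0 - deriv φ 0 * 0 :=
    fun w => is_const_of_deriv_eq_zero (fun x => (hψ x).differentiableAt)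
      (fun x => (hψ x).deriv) w 0
  have := hconst z
  rw [mul_zero, sub_zero] at this
  linear_combination this

lemma my_re_bound {C M : ℝ} {N : ℕ} (hC : 0 < C) (hM : 0 ≤ M) {w : ℂ} {r : ℝ}
    (hr : Real.exp r ≤ C * (1 + ‖w‖) ^ N * Real.exp (M * |w.im|)) :
    r ≤ (|Real.log C| + N + M) * (1 + ‖w‖) := by
  set A := ‖w‖ with hA
  have hA0 : 0 ≤ A := norm_nonneg w
  have h1 : (0:ℝ) < 1 + A := by linarith
  have hrhs : C * (1 + A) ^ N * Real.exp (M * |w.im|)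
      = Real.exp (Real.log C + N * Real.log (1 + A) + M * |w.im|) := by
    rw [Real.exp_add, Real.exp_add, Real.exp_log hC]
    congr 1
    rw [← Real.log_pow, Real.exp_log (by positivity)]
  rw [hrhs] at hr
  have h2 : r ≤ Real.log C + N * Real.log (1 + A) + M * |w.im| := Real.exp_le_exp.mp hr
  have h3 : Real.log (1 + A) ≤ A := by
    have := Real.log_le_sub_one_of_pos h1
    linarith
  have h4 : |w.im| ≤ A := Complex.abs_im_le_norm w
  have h5 : Real.log C ≤ |Real.log C| := le_abs_self _
  have h6 : (0:ℝ) ≤ |Real.log C| := abs_nonneg _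
  have h7 : (N:ℝ) * Real.log (1 + A) ≤ (N:ℝ) * A :=
    mul_le_mul_of_nonneg_left h3 (Nat.cast_nonneg N)
  have h8 : M * |w.im| ≤ M * A := mul_le_mul_of_nonneg_left h4 hM
  have hN : (0:ℝ) ≤ (N:ℝ) := Nat.cast_nonneg _
  nlinarith [mul_nonneg h6 hA0, mul_nonneg hN hA0, mul_nonneg hM hA0]

/-- The pair `(z - 1, z³)` is unimodular in `E_exp(ℂ)` but not reducible, so the
Bass stable rank of `E_exp(ℂ)` is at least two. -/
theorem unimodular_pair_not_reducible :
    (∃ p q : ℂ → ℂ, ExpType p ∧ ExpType q ∧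
      ∀ z : ℂ, p z * (z - 1) + q z * z ^ 3 = 1) ∧
    ∀ h : ℂ → ℂ, ExpType h →
      ¬ ∃ g : ℂ → ℂ, ExpType g ∧ ∀ z : ℂ, (z - 1 + h z * z ^ 3) * g z = 1 := by
  constructor
  · refine ⟨fun z => -(z^2 + z + 1), fun _ => 1, ⟨?_, 1, one_pos, 2, 1, one_pos, ?_⟩,
      ⟨differentiable_const 1, 1, one_pos, 0, 1, one_pos, ?_⟩, fun z => by ring⟩
    · fun_prop
    · intro z
      set A := ‖z‖ with hA
      have hA0 : 0 ≤ A := norm_nonneg z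
      have h1 : ‖-(z^2 + z + 1)‖ ≤ A^2 + A + 1 := by
        rw [norm_neg]
        calc ‖z^2 + z + 1‖ ≤ ‖z^2 + z‖ + ‖(1:ℂ)‖ :=
              norm_add_le _ _
          _ ≤ ‖z^2‖ + ‖z‖ + ‖(1:ℂ)‖ := by
              gcongr; exact norm_add_le _ _
          _ = A^2 + A + 1 := by rw [norm_pow]; simp [hA]
      have h2 : (1:ℝ) ≤ Real.exp (1 * |z.im|) := by
        rw [← Real.exp_zero]
        apply Real.exp_le_exp.mpr
        positivity
      have h3 : A^2 + A + 1 ≤ (1 + A)^2 := by nlinarith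
      calc ‖-(z^2 + z + 1)‖ ≤ (1 + A)^2 := h1.trans h3
        _ = 1 * (1 + A)^2 * 1 := by ring
        _ ≤ 1 * (1 + A)^2 * Real.exp (1 * |z.im|) := by gcongr
    · intro z
      have h2 : (1:ℝ) ≤ Real.exp (1 * |z.im|) := by
        rw [← Real.exp_zero]; exact Real.exp_le_exp.mpr (by positivity)
      simpa using h2
  · rintro h ⟨hhd, Ch, hCh, Nh, Mh, hMh, hhb⟩ ⟨g, ⟨hgd, Cg, hCg, Ng, Mg, hMg, hgb⟩, hfg⟩
    set f : ℂ → ℂ := fun z => z - 1 + h z * z^3 with hfdef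
    have hfd : Differentiable ℂ f := by
      apply Differentiable.add
      · exact differentiable_id.sub (differentiable_const 1)
      · exact hhd.mul (differentiable_pow 3)
    have hfz : ∀ z, f z ≠ 0 := by
      intro z hz
      have := hfg z
      rw [show z - 1 + h z * z^3 = f z from rfl, hz, zero_mul] at this
      exact zero_ne_one this
    have hgz : ∀ z, g z ≠ 0 := by
      intro z hz
      have := hfg z
      rw [hz, mul_zero] at this
      exact zero_ne_one this
    -- exponential-type bound for f
    set Cf : ℝ := 1 + Ch with hCf
    have hCf0 : 0 < Cf := by linarith
    have hfb : ∀ z : ℂ, ‖f z‖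
        ≤ Cf * (1 + ‖z‖) ^ (Nh + 3) * Real.exp (Mh * |z.im|) := by
      intro z
      set A := ‖z‖ with hA
      have hA0 : 0 ≤ A := norm_nonneg z
      set E := Real.exp (Mh * |z.im|) with hE
      have hE1 : 1 ≤ E := by
        rw [hE, ← Real.exp_zero]
        exact Real.exp_le_exp.mpr (by positivity)
      have h1 : ‖f z‖ ≤ (1 + A) + (Ch * (1 + A)^Nh * E) * A^3 := by
        calc ‖f z‖ ≤ ‖z - 1‖ + ‖h z * z^3‖ :=
              norm_add_le _ _
          _ ≤ (1 + A) + (Ch * (1 + A)^Nh * E) * A^3 := by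
              gcongr
              · calc ‖z - 1‖ ≤ ‖z‖ + ‖-1‖ := by
                      simpa [sub_eq_add_neg] using norm_add_le z (-1)
                  _ = A + 1 := by simp [hA]
                  _ = 1 + A := by ring
              · rw [norm_mul, norm_pow]
                gcongr
                exact hhb z
      have h2 : (1 + A) ≤ (1 + A)^(Nh+3) * E := by
        have : (1 + A) ≤ (1 + A)^(Nh+3) := by
          calc (1 + A) = (1 + A)^1 := (pow_one _).symm
            _ ≤ (1 + A)^(Nh+3) := pow_le_pow_right₀ (by linarith) (by omega)
        nlinarith
      have h3 : (Ch * (1 + A)^Nh * E) * A^3 ≤ Ch * (1 + A)^(Nh+3) * E := by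
        have hA3 : A^3 ≤ (1 + A)^3 := by nlinarith
        have : (1 + A)^Nh * A^3 ≤ (1 + A)^(Nh+3) := by
          rw [pow_add]
          exact mul_le_mul_of_nonneg_left hA3 (by positivity)
        calc Ch * (1 + A)^Nh * E * A^3 = (Ch * E) * ((1 + A)^Nh * A^3) := by ring
          _ ≤ (Ch * E) * (1 + A)^(Nh+3) :=
              mul_le_mul_of_nonneg_left this (mul_nonneg hCh.le (by linarith))
          _ = Ch * (1 + A)^(Nh+3) * E := by ring
      calc ‖f z‖ ≤ (1 + A) + (Ch * (1 + A)^Nh * E) * A^3 := h1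
        _ ≤ (1 + A)^(Nh+3) * E + Ch * (1 + A)^(Nh+3) * E := by linarith
        _ = Cf * (1 + A)^(Nh+3) * E := by rw [hCf]; ring
    -- logarithm
    obtain ⟨φ, hφd, hφ⟩ := my_exists_log hfd hfz
    -- bound on |Re φ|
    set K : ℝ := (|Real.log Cf| + (Nh+3) + Mh) + (|Real.log Cg| + Ng + Mg) with hK
    have hK1 : 0 ≤ |Real.log Cf| + ((Nh:ℝ)+3) + Mh := by positivity
    have hK2 : 0 ≤ |Real.log Cg| + (Ng:ℝ) + Mg := by positivity
    have hreb : ∀ z : ℂ, |(φ z).re| ≤ K * (1 + ‖z‖) := by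
      intro z
      have habsf : Real.exp ((φ z).re) = ‖f z‖ := by
        rw [← hφ z, Complex.norm_exp]
      have habsg : Real.exp (-(φ z).re) = ‖g z‖ := by
        have hmul : ‖f z‖ * ‖g z‖ = 1 := by
          rw [← norm_mul]
          have := hfg z
          rw [show z - 1 + h z * z^3 = f z from rfl] at this
          rw [this, norm_one]
        rw [Real.exp_neg, habsf, inv_eq_of_mul_eq_one_right hmul]
      have hup : (φ z).re ≤ (|Real.log Cf| + ((Nh+3 : ℕ) : ℝ) + Mh) * (1 + ‖z‖) := by
        apply my_re_bound hCf0 hMh.le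
        rw [habsf]
        exact hfb z
      have hdown : -(φ z).re ≤ (|Real.log Cg| + Ng + Mg) * (1 + ‖z‖) := by
        apply my_re_bound hCg hMg.le
        rw [habsg]
        exact hgb z
      rw [abs_le]
      have hz1 : (0:ℝ) ≤ 1 + ‖z‖ := by positivity
      constructor
      · have : (|Real.log Cg| + Ng + Mg) * (1 + ‖z‖) ≤ K * (1 + ‖z‖) := by
          apply mul_le_mul_of_nonneg_right _ hz1
          rw [hK]; push_cast; linarith
        linarith
      · have : (|Real.log Cf| + ((Nh:ℝ)+3) + Mh) * (1 + ‖z‖)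
            ≤ K * (1 + ‖z‖) := by
          apply mul_le_mul_of_nonneg_right _ hz1
          rw [hK]; push_cast; linarith
        push_cast at hup
        linarith
    have hlin := my_linear_of_re_bound hφd hreb
    set a : ℂ := deriv φ 0 with ha
    set b : ℂ := φ 0 with hb
    have hexp : ∀ z, f z = Complex.exp (b + a * z) := by
      intro z
      rw [← hφ z, hlin z]
    -- f 0 = -1
    have hf0 : f 0 = -1 := by
      rw [hfdef]
      simp
    have hexpb : Complex.exp b = -1 := by
      have := hexp 0
      rw [hf0, mul_zero, add_zero] at this
      exact this.symm
    -- derivative of f at 0 equals 1 and equals -a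
    have hd1 : HasDerivAt f 1 0 := by
      have h1 : HasDerivAt (fun z : ℂ => z - 1) 1 0 := (hasDerivAt_id 0).sub_const 1
      have h2 : HasDerivAt (fun z : ℂ => h z * z^3)
          (deriv h 0 * (0:ℂ)^3 + h 0 * ((3:ℕ) * (0:ℂ)^2)) 0 :=
        (hhd.differentiableAt.hasDerivAt).mul (hasDerivAt_pow 3 0)
      have := h1.add h2
      norm_num at this
      exact this
    have hd2 : HasDerivAt f (-a) 0 := by
      have h1 : HasDerivAt (fun z : ℂ => Complex.exp (b + a * z))
          (Complex.exp (b + a * 0) * a) 0 := by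
        have hz : HasDerivAt (fun z : ℂ => b + a * z) a 0 := by
          simpa using ((hasDerivAt_id (0:ℂ)).const_mul a).const_add b
        exact hz.cexp
      rw [mul_zero, add_zero, hexpb] at h1
      have hfeq : f = fun z => Complex.exp (b + a * z) := funext hexp
      rw [hfeq]
      simpa using h1
    have haval : a = -1 := by
      have := hd1.unique hd2
      linear_combination this
    -- Re b = 0
    have hbre : b.re = 0 := by
      have h1 : Real.exp b.re = 1 := by
        have := congrArg (‖·‖) hexpb
        rwa [Complex.norm_exp, norm_neg, norm_one] at this
      have := congrArg Real.log h1
      rwa [Real.log_exp, Real.log_one] at this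
    -- contradiction on the real axis
    have key : ∀ t : ℝ, Real.exp (-t) ≤ Cf * (1 + |t|) ^ (Nh+3) := by
      intro t
      have h1 := hfb (t : ℂ)
      rw [hexp (t:ℂ)] at h1
      rw [Complex.norm_exp] at h1
      have h2 : (b + a * (t:ℂ)).re = -t := by
        rw [haval]
        simp [hbre]
      rw [h2] at h1
      simpa using h1
    obtain ⟨t, ht1, ht2⟩ :=
      (((Real.tendsto_exp_div_pow_atTop (Nh+3)).eventually_gt_atTop
        (Cf * 2^(Nh+3))).and (Filter.eventually_ge_atTop 1)).exists
    have h1 := key (-t)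
    rw [neg_neg, abs_neg, _root_.abs_of_nonneg (by linarith : (0:ℝ) ≤ t)] at h1
    have h2 : (1 + t)^(Nh+3) ≤ (2*t)^(Nh+3) := by
      apply pow_le_pow_left₀ (by linarith) (by linarith)
    have h3 : Real.exp t ≤ Cf * (2^(Nh+3) * t^(Nh+3)) := by
      calc Real.exp t ≤ Cf * (1+t)^(Nh+3) := h1
        _ ≤ Cf * (2*t)^(Nh+3) := by nlinarith
        _ = Cf * (2^(Nh+3) * t^(Nh+3)) := by rw [mul_pow]
    have ht0 : (0:ℝ) < t^(Nh+3) := by positivity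
    have h4 : Real.exp t / t^(Nh+3) ≤ Cf * 2^(Nh+3) := by
      rw [div_le_iff₀ ht0]
      calc Real.exp t ≤ Cf * (2^(Nh+3) * t^(Nh+3)) := h3
        _ = Cf * 2^(Nh+3) * t^(Nh+3) := by ring
    linarith
end
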